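/- arXiv:math-ph/0609041 — 5 statements merged into one kernel-verified Lean document; each statement's English description precedes it below -/
import Mathlib

section
/- Let (M_k)_{k≥1} be a sequence of real-valued random variables on a probability space such that for every real p ≥ 1 there is a constant C_p > 0 with E|M_k|^{2p} ≤ C_p k^p for all k ≥ 1. Then there exists a random variable T taking values in the positive integers such that almost surely |M_k| ≤ k for all k ≥ T, and moreover E[T^p] < ∞ for every p ≥ 1. -/
open MeasureTheory Filter

/-- Markov-type bound: if `E|f|^{2q} ≤ C k^q` then `μ(|f| > k) ≤ C / k^q`. -/
private lemma aux_markov {Ω : Type*} [MeasurableSpace Ω] (μ : Measure Ω)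
    (f : Ω → ℝ) (hf : Measurable f) (q C : ℝ) (hq : 1 ≤ q) (k : ℕ) (hk : 1 ≤ k)
    (hC : 0 < C)
    (hint : ∫⁻ ω, ENNReal.ofReal (|f ω| ^ (2 * q)) ∂μ ≤ ENNReal.ofReal (C * (k : ℝ) ^ q)) :
    μ {ω | (k : ℝ) < |f ω|} ≤ ENNReal.ofReal (C / (k : ℝ) ^ q) := by
  have hk0 : (0:ℝ) < k := by exact_mod_cast hk
  set ε : ENNReal := ENNReal.ofReal ((k : ℝ) ^ (2 * q)) with hε
  have hεpos : 0 < ε := by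
    rw [hε]
    exact ENNReal.ofReal_pos.mpr (Real.rpow_pos_of_pos hk0 _)
  have hεtop : ε ≠ ⊤ := ENNReal.ofReal_ne_top
  have hsub : {ω | (k : ℝ) < |f ω|} ⊆
      {ω | ε ≤ ENNReal.ofReal (|f ω| ^ (2 * q))} := by
    intro ω hω
    have h1 : (k : ℝ) ^ (2 * q) ≤ |f ω| ^ (2 * q) :=
      Real.rpow_le_rpow hk0.le (le_of_lt hω) (by positivity)
    exact ENNReal.ofReal_le_ofReal h1
  have hmarkov := mul_meas_ge_le_lintegral₀ (μ := μ)
    (f := fun ω => ENNReal.ofReal (|f ω| ^ (2 * q)))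
    ((hf.abs.pow_const _).ennreal_ofReal.aemeasurable) ε
  have h2 : ε * μ {ω | (k : ℝ) < |f ω|} ≤ ENNReal.ofReal (C * (k : ℝ) ^ q) :=
    le_trans (mul_le_mul_right (measure_mono hsub) ε) (le_trans hmarkov hint)
  have h3 : μ {ω | (k : ℝ) < |f ω|} ≤ ENNReal.ofReal (C * (k : ℝ) ^ q) / ε := by
    rw [ENNReal.le_div_iff_mul_le (Or.inl hεpos.ne') (Or.inl hεtop), mul_comm]
    exact h2
  refine h3.trans (le_of_eq ?_)
  rw [hε, ← ENNReal.ofReal_div_of_pos (Real.rpow_pos_of_pos hk0 _)]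
  congr 1
  have hkq : (0:ℝ) < (k : ℝ) ^ q := Real.rpow_pos_of_pos hk0 _
  rw [show (2 : ℝ) * q = q + q by ring, Real.rpow_add hk0]
  field_simp

/-- If a sequence of real random variables satisfies `E|M_k|^{2p} ≤ C_p k^p` for every
`p ≥ 1`, then there is a positive-integer-valued random variable `T` such that almost surely
`|M_k| ≤ k` for all `k ≥ T`, and `E[T^p] < ∞` for every `p ≥ 1`. -/
theorem stmt0 {Ω : Type*} [MeasurableSpace Ω] (μ : Measure Ω) [IsProbabilityMeasure μ]
    (M : ℕ → Ω → ℝ) (hmeas : ∀ k, Measurable (M k))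
    (hmom : ∀ p : ℝ, 1 ≤ p → ∃ C : ℝ, 0 < C ∧ ∀ k : ℕ, 1 ≤ k →
      ∫⁻ ω, ENNReal.ofReal (|M k ω| ^ (2 * p)) ∂μ ≤ ENNReal.ofReal (C * (k : ℝ) ^ p)) :
    ∃ T : Ω → ℕ, Measurable T ∧ (∀ ω, 1 ≤ T ω) ∧
      (∀ᵐ ω ∂μ, ∀ k : ℕ, T ω ≤ k → |M k ω| ≤ (k : ℝ)) ∧
      (∀ p : ℝ, 1 ≤ p → ∫⁻ ω, ENNReal.ofReal ((T ω : ℝ) ^ p) ∂μ < ⊤) := by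
  classical
  -- the "good from N on" sets
  set S : ℕ → Set Ω := fun N => {ω | ∀ k : ℕ, N ≤ k → |M k ω| ≤ (k : ℝ)} with hSdef
  have hSmeas : ∀ N, MeasurableSet (S N) := by
    intro N
    have : S N = ⋂ k : ℕ, {ω | N ≤ k → |M k ω| ≤ (k : ℝ)} := by
      ext ω; simp [hSdef, Set.mem_iInter]
    rw [this]
    refine MeasurableSet.iInter fun k => ?_
    by_cases h : N ≤ k
    · simp only [h, forall_true_left]
      exact measurableSet_le (hmeas k).abs measurable_const
    · simp only [h, false_implies]
      simp
  have hSmono : ∀ {m n : ℕ}, m ≤ n → S m ⊆ S n := by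
    intro m n hmn ω hω k hk
    exact hω k (hmn.trans hk)
  -- bad sets
  set B : ℕ → Set Ω := fun k => {ω | (k : ℝ) < |M k ω|} with hBdef
  have hBmeas : ∀ k, MeasurableSet (B k) :=
    fun k => measurableSet_lt measurable_const (hmeas k).abs
  -- tail bound on bad sets: for every q ≥ 1, μ (B k) ≤ C_q / k^q for k ≥ 1
  have hBtail : ∀ q : ℝ, 1 ≤ q → ∃ C : ℝ, 0 < C ∧ ∀ k : ℕ, 1 ≤ k →
      μ (B k) ≤ ENNReal.ofReal (C / (k : ℝ) ^ q) := by
    intro q hq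
    obtain ⟨C, hC, hCk⟩ := hmom q hq
    exact ⟨C, hC, fun k hk => aux_markov μ (M k) (hmeas k) q C hq k hk hC (hCk k hk)⟩
  -- define T
  set T : Ω → ℕ := fun ω => if h : ∃ N, ω ∈ S N then max (Nat.find h) 1 else 1 with hTdef
  have hT1 : ∀ ω, 1 ≤ T ω := by
    intro ω
    rw [hTdef]
    by_cases h : ∃ N, ω ∈ S N
    · simp [h]
    · simp [h]
  -- key structural facts about T
  have hTgood : ∀ ω, (∃ N, ω ∈ S N) → ω ∈ S (T ω) := by
    intro ω h
    rw [hTdef]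
    simp only [h, dif_pos]
    exact hSmono (le_max_left _ _) (Nat.find_spec h)
  have hTbad : ∀ ω, 2 ≤ T ω → ω ∈ B (T ω - 1) := by
    intro ω h2
    have h : ∃ N, ω ∈ S N := by
      by_contra hc
      rw [hTdef] at h2; simp [hc] at h2
    have hTeq : T ω = Nat.find h := by
      rw [hTdef]; simp only [h, dif_pos]
      have : 2 ≤ max (Nat.find h) 1 := by rw [hTdef] at h2; simpa [h] using h2
      have hf2 : 2 ≤ Nat.find h := by omega
      omega
    set N := Nat.find h with hN
    have hf2 : 2 ≤ N := by omega
    have hnot : ω ∉ S (N - 1) := Nat.find_min h (by omega)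
    have hin : ω ∈ S N := Nat.find_spec h
    -- ¬ S (N-1): ∃ k ≥ N-1 with |M k ω| > k; since S N holds, k = N-1
    simp only [hSdef, Set.mem_setOf_eq] at hnot
    push_neg at hnot
    obtain ⟨k, hk1, hk2⟩ := hnot
    have hkeq : k = N - 1 := by
      by_contra hne
      have : N ≤ k := by omega
      exact absurd (hin k this) (not_le.mpr hk2)
    rw [hTeq]
    rw [hBdef]
    exact Set.mem_setOf.mpr (hkeq ▸ hk2)
  -- measurability of T
  have hTmeas : Measurable T := by
    apply measurable_to_countable'
    intro n
    match n with
    | 0 =>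
      have : T ⁻¹' {0} = ∅ := by
        ext ω; simp only [Set.mem_preimage, Set.mem_singleton_iff, Set.mem_empty_iff_false,
          iff_false]
        exact fun h => by have := hT1 ω; omega
      rw [this]; exact MeasurableSet.empty
    | 1 =>
      have : T ⁻¹' {1} = S 1 ∪ (⋃ N, S N)ᶜ := by
        ext ω
        simp only [Set.mem_preimage, Set.mem_singleton_iff, Set.mem_union, Set.mem_compl_iff,
          Set.mem_iUnion]
        constructor
        · intro h
          by_cases hex : ∃ N, ω ∈ S N
          · left
            have := hTgood ω hex
            rw [h] at this
            exact hSmono le_rfl this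
          · right; exact hex
        · intro h
          rcases h with h | h
          · have hex : ∃ N, ω ∈ S N := ⟨1, h⟩
            rw [hTdef]; simp only [hex, dif_pos]
            have : Nat.find hex ≤ 1 := Nat.find_le h
            omega
          · rw [hTdef]; simp [h]
      rw [this]
      exact (hSmeas 1).union (MeasurableSet.iUnion hSmeas).compl
    | (n+2) =>
      have : T ⁻¹' {n+2} = S (n+2) \ S (n+1) := by
        ext ω
        simp only [Set.mem_preimage, Set.mem_singleton_iff, Set.mem_diff]
        constructor
        · intro h
          have hex : ∃ N, ω ∈ S N := by
            by_contra hc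
            rw [hTdef] at h; simp [hc] at h
          have hg := hTgood ω hex
          rw [h] at hg
          refine ⟨hg, ?_⟩
          rw [hTdef] at h; simp only [hex, dif_pos] at h
          have hfind : Nat.find hex = n + 2 := by omega
          have := Nat.find_min hex (m := n+1) (by omega)
          exact this
        · rintro ⟨h1, h2⟩
          have hex : ∃ N, ω ∈ S N := ⟨n+2, h1⟩
          rw [hTdef]; simp only [hex, dif_pos]
          have hle : Nat.find hex ≤ n + 2 := Nat.find_le h1
          have hgt : n + 1 < Nat.find hex := by
            by_contra hc
            push_neg at hc
            exact h2 (hSmono hc (Nat.find_spec hex))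
          omega
      rw [this]
      exact (hSmeas _).diff (hSmeas _)
  refine ⟨T, hTmeas, hT1, ?_, ?_⟩
  · -- a.s. eventually good
    obtain ⟨C, hC, hCk⟩ := hBtail 3 (by norm_num)
    have hsum : (∑' k : ℕ, μ (B (k+1))) ≠ ⊤ := by
      have hbound : ∀ k : ℕ, μ (B (k+1)) ≤ ENNReal.ofReal (C / ((k:ℝ)+1) ^ (3:ℝ)) := by
        intro k
        have := hCk (k+1) (by omega)
        simpa [Nat.cast_add, Nat.cast_one] using this
      have hsummable : Summable (fun k : ℕ => C / ((k:ℝ)+1) ^ (3:ℝ)) := by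
        have h1 : Summable (fun n : ℕ => 1 / (n:ℝ) ^ (3:ℝ)) :=
          Real.summable_one_div_nat_rpow.mpr (by norm_num)
        have h2 : Summable (fun k : ℕ => 1 / ((k:ℝ)+1) ^ (3:ℝ)) := by
          have := (summable_nat_add_iff 1).mpr h1
          simpa [Nat.cast_add, Nat.cast_one] using this
        simpa [div_eq_mul_inv, one_mul] using h2.mul_left C
      apply ne_top_of_le_ne_top (b := ENNReal.ofReal (∑' k : ℕ, C / ((k:ℝ)+1) ^ (3:ℝ)))
        ENNReal.ofReal_ne_top
      calc (∑' k : ℕ, μ (B (k+1))) ≤ ∑' k : ℕ, ENNReal.ofReal (C / ((k:ℝ)+1) ^ (3:ℝ)) :=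
            ENNReal.tsum_le_tsum hbound
        _ = ENNReal.ofReal (∑' k : ℕ, C / ((k:ℝ)+1) ^ (3:ℝ)) :=
            (ENNReal.ofReal_tsum_of_nonneg (fun k => by positivity) hsummable).symm
    have hae := ae_eventually_notMem (μ := μ) (s := fun k => B (k+1)) hsum
    filter_upwards [hae] with ω hω k hk
    have hex : ∃ N, ω ∈ S N := by
      obtain ⟨N, hN⟩ := eventually_atTop.mp hω
      refine ⟨N + 1, fun j hj => ?_⟩
      have hj1 : 1 ≤ j := by omega
      have := hN (j - 1) (by omega)
      have hjm : j - 1 + 1 = j := by omega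
      rw [hjm] at this
      simpa [hBdef, not_lt] using this
    exact hTgood ω hex k hk
  · -- moments
    intro p hp
    obtain ⟨C, hC, hCk⟩ := hBtail (p + 2) (by linarith)
    -- pointwise bound
    have hpt : ∀ ω, ENNReal.ofReal ((T ω : ℝ) ^ p) ≤
        1 + ∑' k : ℕ, (B (k+1)).indicator
          (fun _ => ENNReal.ofReal (((k:ℝ)+2) ^ p)) ω := by
      intro ω
      rcases Nat.lt_or_ge (T ω) 2 with h | h
      · have : T ω = 1 := by have := hT1 ω; omega
        rw [this]
        simp only [Nat.cast_one, Real.one_rpow, ENNReal.ofReal_one]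
        exact le_add_of_le_of_nonneg le_rfl zero_le
      · have hB := hTbad ω h
        set N := T ω with hN
        have hNsub : N - 1 = (N - 2) + 1 := by omega
        have hterm : (B ((N-2)+1)).indicator
            (fun _ => ENNReal.ofReal ((((N-2:ℕ):ℝ)+2) ^ p)) ω
            = ENNReal.ofReal ((((N-2:ℕ):ℝ)+2) ^ p) := by
          rw [Set.indicator_of_mem]
          rw [← hNsub]
          exact hB
        have hcast : (((N-2:ℕ):ℝ)+2) = (N : ℝ) := by
          have : ((N - 2 : ℕ) : ℝ) = (N : ℝ) - 2 := by
            have : (N : ℝ) ≥ 2 := by exact_mod_cast h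
            push_cast [Nat.cast_sub (by omega : 2 ≤ N)]
            ring
          rw [this]; ring
        calc ENNReal.ofReal ((N : ℝ) ^ p)
            = (B ((N-2)+1)).indicator (fun _ => ENNReal.ofReal ((((N-2:ℕ):ℝ)+2) ^ p)) ω := by
              rw [hterm, hcast]
          _ ≤ ∑' k : ℕ, (B (k+1)).indicator (fun _ => ENNReal.ofReal (((k:ℝ)+2) ^ p)) ω :=
              ENNReal.le_tsum (N-2)
          _ ≤ 1 + _ := le_add_self
    calc ∫⁻ ω, ENNReal.ofReal ((T ω : ℝ) ^ p) ∂μ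
        ≤ ∫⁻ ω, (1 + ∑' k : ℕ, (B (k+1)).indicator
            (fun _ => ENNReal.ofReal (((k:ℝ)+2) ^ p)) ω) ∂μ := lintegral_mono hpt
      _ = 1 + ∑' k : ℕ, ENNReal.ofReal (((k:ℝ)+2) ^ p) * μ (B (k+1)) := by
          rw [lintegral_add_left measurable_const, lintegral_one, measure_univ]
          congr 1
          rw [lintegral_tsum (fun k => ((measurable_const.indicator (hBmeas (k+1))).aemeasurable))]
          refine tsum_congr fun k => ?_
          exact lintegral_indicator_const (hBmeas (k+1)) _
      _ < ⊤ := by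
          rw [ENNReal.add_lt_top]
          refine ⟨ENNReal.one_lt_top, ?_⟩
          have hbound : ∀ k : ℕ, ENNReal.ofReal (((k:ℝ)+2) ^ p) * μ (B (k+1)) ≤
              ENNReal.ofReal (((k:ℝ)+2) ^ p * (C / ((k:ℝ)+1) ^ (p+2))) := by
            intro k
            have h1 := hCk (k+1) (by omega)
            have h1' : μ (B (k+1)) ≤ ENNReal.ofReal (C / ((k:ℝ)+1) ^ (p+2)) := by
              simpa [Nat.cast_add, Nat.cast_one] using h1
            calc ENNReal.ofReal (((k:ℝ)+2) ^ p) * μ (B (k+1))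
                ≤ ENNReal.ofReal (((k:ℝ)+2) ^ p) * ENNReal.ofReal (C / ((k:ℝ)+1) ^ (p+2)) :=
                  mul_le_mul_right h1' _
              _ = ENNReal.ofReal (((k:ℝ)+2) ^ p * (C / ((k:ℝ)+1) ^ (p+2))) :=
                  (ENNReal.ofReal_mul (by positivity)).symm
          have hsummable : Summable (fun k : ℕ => ((k:ℝ)+2) ^ p * (C / ((k:ℝ)+1) ^ (p+2))) := by
            -- bound by 2^p * C / (k+1)^2
            have hterm : ∀ k : ℕ, ((k:ℝ)+2) ^ p * (C / ((k:ℝ)+1) ^ (p+2)) ≤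
                (2:ℝ) ^ p * C * (1 / ((k:ℝ)+1) ^ (2:ℝ)) := by
              intro k
              have hk1 : (0:ℝ) < (k:ℝ)+1 := by positivity
              have h2 : ((k:ℝ)+2) ≤ 2 * ((k:ℝ)+1) := by linarith
              have h3 : ((k:ℝ)+2) ^ p ≤ (2 * ((k:ℝ)+1)) ^ p :=
                Real.rpow_le_rpow (by positivity) h2 (by linarith)
              have h4 : (2 * ((k:ℝ)+1)) ^ p = 2 ^ p * ((k:ℝ)+1) ^ p :=
                Real.mul_rpow (by norm_num) hk1.le
              have h5 : ((k:ℝ)+1) ^ (p+2) = ((k:ℝ)+1) ^ p * ((k:ℝ)+1) ^ (2:ℝ) :=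
                Real.rpow_add hk1 p 2
              have hkp : (0:ℝ) < ((k:ℝ)+1) ^ p := Real.rpow_pos_of_pos hk1 _
              have hk2 : (0:ℝ) < ((k:ℝ)+1) ^ (2:ℝ) := Real.rpow_pos_of_pos hk1 _
              calc ((k:ℝ)+2) ^ p * (C / ((k:ℝ)+1) ^ (p+2))
                  ≤ 2 ^ p * ((k:ℝ)+1) ^ p * (C / ((k:ℝ)+1) ^ (p+2)) := by
                    apply mul_le_mul_of_nonneg_right (h4 ▸ h3) (by positivity)
                _ = (2:ℝ) ^ p * C * (1 / ((k:ℝ)+1) ^ (2:ℝ)) := by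
                    rw [h5]; field_simp
            have hsum2 : Summable (fun k : ℕ => (2:ℝ) ^ p * C * (1 / ((k:ℝ)+1) ^ (2:ℝ))) := by
              have h1 : Summable (fun n : ℕ => 1 / (n:ℝ) ^ (2:ℝ)) :=
                Real.summable_one_div_nat_rpow.mpr (by norm_num)
              have h2 : Summable (fun k : ℕ => 1 / ((k:ℝ)+1) ^ (2:ℝ)) := by
                have := (summable_nat_add_iff 1).mpr h1
                simpa [Nat.cast_add, Nat.cast_one] using this
              exact h2.mul_left _
            exact Summable.of_nonneg_of_le (fun k => by positivity) hterm hsum2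
          calc (∑' k : ℕ, ENNReal.ofReal (((k:ℝ)+2) ^ p) * μ (B (k+1)))
              ≤ ∑' k : ℕ, ENNReal.ofReal (((k:ℝ)+2) ^ p * (C / ((k:ℝ)+1) ^ (p+2))) :=
                ENNReal.tsum_le_tsum hbound
            _ = ENNReal.ofReal (∑' k : ℕ, ((k:ℝ)+2) ^ p * (C / ((k:ℝ)+1) ^ (p+2))) :=
                (ENNReal.ofReal_tsum_of_nonneg (fun k => by positivity) hsummable).symm
            _ < ⊤ := ENNReal.ofReal_lt_top
end

section
/- Let a > 0, λ > 0 and p ≥ 1. On a probability space, let (t_k)_{k≥1} be i.i.d. random variables exponentially distributed with parameter λ, let (g_k)_{k≥1} be i.i.d. nonnegative random variables with E g_1^p < ∞, and let (h_k)_{k≥0} be nonnegative random variables such that for every k ≥ 1 the random variable t_k is independent of h_{k−1}, and such that for every ε > 0 there is a constant C_ε > 0 with h_k ≤ (1+ε) e^{−a t_k} h_{k−1} + C_ε g_k almost surely for all k ≥ 1. Then there exist constants γ ∈ (0,1) and C_p > 0, not depending on k, such that E h_k^p ≤ γ^k E h_0^p + (C_p/(1−γ)) E g_1^p for all k ≥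 0. -/
open MeasureTheory ProbabilityTheory

open Real
open scoped ENNReal

lemma expMoment {lam c : ℝ} (hlam : 0 < lam) (hc : 0 < c) :
    ∫⁻ x, ENNReal.ofReal (Real.exp (-c * x)) ∂(expMeasure lam)
      = ENNReal.ofReal (lam / (lam + c)) := by
  have hlc : 0 < lam + c := by linarith
  have hmeas : Measurable (exponentialPDF lam) :=
    (measurable_exponentialPDFReal lam).ennreal_ofReal
  have hexp : Measurable fun x : ℝ => ENNReal.ofReal (Real.exp (-c * x)) :=
    ((measurable_const.mul measurable_id).exp).ennreal_ofReal
  have h0 : expMeasure lam = volume.withDensity (exponentialPDF lam) := rfl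
  rw [h0, lintegral_withDensity_eq_lintegral_mul _ hmeas hexp]
  have hpt : ∀ x : ℝ, (exponentialPDF lam * fun x => ENNReal.ofReal (Real.exp (-c * x))) x
      = ENNReal.ofReal (lam / (lam + c)) * exponentialPDF (lam + c) x := by
    intro x
    rcases lt_or_ge x 0 with hx | hx
    · simp [exponentialPDF_of_neg hx]
    · simp only [Pi.mul_apply, exponentialPDF_of_nonneg hx]
      rw [← ENNReal.ofReal_mul (by positivity), ← ENNReal.ofReal_mul (by positivity)]
      congr 1
      rw [mul_assoc, ← Real.exp_add, show -(lam * x) + -c * x = -((lam + c) * x) by ring]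
      field_simp
  rw [lintegral_congr hpt, lintegral_const_mul _ (show Measurable (exponentialPDF (lam+c)) from (measurable_exponentialPDFReal (lam+c)).ennreal_ofReal),
    lintegral_exponentialPDF_eq_one hlc, mul_one]

lemma weighted_pow {p : ℝ} (hp : 1 ≤ p) {θ A B : ℝ} (hθ0 : 0 < θ) (hθ1 : θ < 1)
    (hA : 0 ≤ A) (hB : 0 ≤ B) :
    (A + B) ^ p ≤ (1 - θ) ^ (1 - p) * A ^ p + θ ^ (1 - p) * B ^ p := by
  have h1θ : 0 < 1 - θ := by linarith
  have hx : A / (1 - θ) ∈ Set.Ici (0:ℝ) := Set.mem_Ici.mpr (by positivity)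
  have hy : B / θ ∈ Set.Ici (0:ℝ) := Set.mem_Ici.mpr (by positivity)
  have hcv := (convexOn_rpow hp).2 hx hy h1θ.le hθ0.le (by ring)
  simp only [smul_eq_mul] at hcv
  rw [mul_div_cancel₀ _ h1θ.ne', mul_div_cancel₀ _ hθ0.ne'] at hcv
  refine hcv.trans (le_of_eq ?_)
  rw [Real.div_rpow hA h1θ.le, Real.div_rpow hB hθ0.le,
    Real.rpow_sub h1θ, Real.rpow_sub hθ0, Real.rpow_one]
  field_simp
  simp only [Real.rpow_one, pow_one]
  ring


/-- Random Gronwall-type iteration in expectation. Here `t k`, `g k`, `h k` stand for the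
`t_{k+1}`, `g_{k+1}`, `h_k` of the paper: `(t_k)` are i.i.d. exponential with rate `λ`,
`(g_k)` are i.i.d. nonnegative with `E g_1^p < ∞`, `t_{k+1}` is independent of `h_k`, and
`h_{k+1} ≤ (1+ε) e^{-a t_{k+1}} h_k + C_ε g_{k+1}` a.s. for every `ε > 0`. Then
`E h_k^p ≤ γ^k E h_0^p + (C_p/(1-γ)) E g_1^p` for some `γ ∈ (0,1)` and `C_p > 0`. -/
theorem stmt4 {Ω : Type*} [MeasurableSpace Ω] (μ : Measure Ω) [IsProbabilityMeasure μ]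
    (a lam p : ℝ) (ha : 0 < a) (hlam : 0 < lam) (hp : 1 ≤ p)
    (t g : ℕ → Ω → ℝ) (h : ℕ → Ω → ℝ)
    (hmt : ∀ k, Measurable (t k)) (hmg : ∀ k, Measurable (g k)) (hmh : ∀ k, Measurable (h k))
    (htindep : iIndepFun t μ)
    (htlaw : ∀ k, μ.map (t k) = expMeasure lam)
    (hgindep : iIndepFun g μ)
    (hglaw : ∀ k, μ.map (g k) = μ.map (g 0))
    (hgnn : ∀ k ω, 0 ≤ g k ω)
    (hgmom : ∫⁻ ω, ENNReal.ofReal (g 0 ω ^ p) ∂μ < ⊤)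
    (hhnn : ∀ k ω, 0 ≤ h k ω)
    (hth : ∀ k, IndepFun (t k) (h k) μ)
    (hrec : ∀ ε : ℝ, 0 < ε → ∃ Cε : ℝ, 0 < Cε ∧
      ∀ᵐ ω ∂μ, ∀ k : ℕ, h (k + 1) ω ≤ (1 + ε) * Real.exp (-a * t k ω) * h k ω + Cε * g k ω) :
    ∃ γ : ℝ, 0 < γ ∧ γ < 1 ∧ ∃ Cp : ℝ, 0 < Cp ∧ ∀ k : ℕ,
      ∫⁻ ω, ENNReal.ofReal (h k ω ^ p) ∂μ ≤
        ENNReal.ofReal (γ ^ k) * ∫⁻ ω, ENNReal.ofReal (h 0 ω ^ p) ∂μ +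
          ENNReal.ofReal (Cp / (1 - γ)) * ∫⁻ ω, ENNReal.ofReal (g 0 ω ^ p) ∂μ := by
  have hp0 : (0:ℝ) < p := lt_of_lt_of_le one_pos hp
  set c : ℝ := a * p with hcdef
  have hc : 0 < c := mul_pos ha hp0
  have hlc : 0 < lam + c := by linarith
  set rr : ℝ := lam / (lam + c) with hrrdef
  have hrr0 : 0 < rr := div_pos hlam hlc
  have hrr1 : rr < 1 := (div_lt_one hlc).mpr (by linarith)
  set τ : ℝ := rr ^ (1 / (4 * p)) with hτdef
  have hτ0 : 0 < τ := Real.rpow_pos_of_pos hrr0 _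
  have hτ1 : τ < 1 := Real.rpow_lt_one hrr0.le hrr1 (by
    apply div_pos one_pos; linarith)
  set θ : ℝ := 1 - τ with hθdef
  have hθ0 : 0 < θ := by simp only [hθdef]; linarith
  have hθ1 : θ < 1 := by simp only [hθdef]; linarith
  set ε : ℝ := rr ^ (-(1 / (2 * p))) - 1 with hεdef
  have h1ε : 1 + ε = rr ^ (-(1 / (2 * p))) := by rw [hεdef]; ring
  have hε : 0 < ε := by
    have h2p : (0:ℝ) < 1 / (2 * p) := by apply div_pos one_pos; linarith
    have : 1 < rr ^ (-(1 / (2 * p))) :=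
      (Real.one_lt_rpow_iff_of_pos hrr0).mpr (Or.inr ⟨hrr1, by linarith⟩)
    simp only [hεdef]; linarith
  have h1εnn : (0:ℝ) ≤ 1 + ε := by linarith
  obtain ⟨Cε, hCε, hrecae⟩ := hrec ε hε
  set γ : ℝ := rr ^ ((1 + p) / (4 * p)) with hγdef
  have hγ0 : 0 < γ := Real.rpow_pos_of_pos hrr0 _
  have hγ1 : γ < 1 := Real.rpow_lt_one hrr0.le hrr1 (by
    apply div_pos (by linarith) (by linarith))
  set Cp : ℝ := θ ^ (1 - p) * Cε ^ p with hCpdef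
  have hCp : 0 < Cp := mul_pos (Real.rpow_pos_of_pos hθ0 _) (Real.rpow_pos_of_pos hCε _)
  have hc1nn : (0:ℝ) ≤ τ ^ (1 - p) * (1 + ε) ^ p :=
    mul_nonneg (Real.rpow_nonneg hτ0.le _) (Real.rpow_nonneg h1εnn _)
  have key : τ ^ (1 - p) * (1 + ε) ^ p * rr = γ := by
    rw [h1ε, hτdef, ← Real.rpow_mul hrr0.le, ← Real.rpow_mul hrr0.le, ← Real.rpow_add hrr0,
      ← Real.rpow_add_one hrr0.ne', hγdef]
    congr 1
    field_simp
    ring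
  -- measurability
  have mHp : ∀ k, Measurable fun ω => ENNReal.ofReal (h k ω ^ p) := by
    intro k; have := hmh k; fun_prop
  have mE : ∀ k, Measurable fun ω => ENNReal.ofReal (Real.exp (-c * t k ω)) := by
    intro k; have := hmt k; fun_prop
  have mGp : ∀ k, Measurable fun ω => ENNReal.ofReal (g k ω ^ p) := by
    intro k; have := hmg k; fun_prop
  have mre : Measurable fun x : ℝ => ENNReal.ofReal (Real.exp (-c * x)) := by fun_prop
  have mrp : Measurable fun x : ℝ => ENNReal.ofReal (x ^ p) := by fun_prop
  -- law computations
  have hEint : ∀ k, ∫⁻ ω, ENNReal.ofReal (Real.exp (-c * t k ω)) ∂μ = ENNReal.ofReal rr := by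
    intro k
    rw [← lintegral_map mre (hmt k), htlaw k, expMoment hlam hc]
  have hGint : ∀ k, ∫⁻ ω, ENNReal.ofReal (g k ω ^ p) ∂μ
      = ∫⁻ ω, ENNReal.ofReal (g 0 ω ^ p) ∂μ := by
    intro k
    rw [← lintegral_map mrp (hmg k), hglaw k, lintegral_map mrp (hmg 0)]
  set H : ℕ → ℝ≥0∞ := fun k => ∫⁻ ω, ENNReal.ofReal (h k ω ^ p) ∂μ with hHdef
  set G : ℝ≥0∞ := ∫⁻ ω, ENNReal.ofReal (g 0 ω ^ p) ∂μ with hGdef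
  -- step inequality
  have hstep : ∀ k, H (k + 1) ≤ ENNReal.ofReal γ * H k + ENNReal.ofReal Cp * G := by
    intro k
    have hae : ∀ᵐ ω ∂μ, ENNReal.ofReal (h (k + 1) ω ^ p) ≤
        ENNReal.ofReal (τ ^ (1 - p) * (1 + ε) ^ p) *
          (ENNReal.ofReal (Real.exp (-c * t k ω)) * ENNReal.ofReal (h k ω ^ p))
        + ENNReal.ofReal Cp * ENNReal.ofReal (g k ω ^ p) := by
      filter_upwards [hrecae] with ω hω
      have h1 := hω k
      have hA : 0 ≤ (1 + ε) * Real.exp (-a * t k ω) * h k ω :=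
        mul_nonneg (mul_nonneg h1εnn (Real.exp_nonneg _)) (hhnn k ω)
      have hB : 0 ≤ Cε * g k ω := mul_nonneg hCε.le (hgnn k ω)
      have e1 : h (k + 1) ω ^ p ≤
          ((1 + ε) * Real.exp (-a * t k ω) * h k ω + Cε * g k ω) ^ p :=
        Real.rpow_le_rpow (hhnn _ ω) h1 hp0.le
      have e2 := weighted_pow hp hθ0 hθ1 hA hB
      rw [show (1:ℝ) - θ = τ by rw [hθdef]; ring] at e2
      have eA : ((1 + ε) * Real.exp (-a * t k ω) * h k ω) ^ p
          = (1 + ε) ^ p * (Real.exp (-c * t k ω) * h k ω ^ p) := by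
        rw [Real.mul_rpow (mul_nonneg h1εnn (Real.exp_nonneg _)) (hhnn k ω),
          Real.mul_rpow h1εnn (Real.exp_nonneg _), ← Real.exp_mul,
          show -a * t k ω * p = -c * t k ω by rw [hcdef]; ring, mul_assoc]
      have eB : (Cε * g k ω) ^ p = Cε ^ p * g k ω ^ p := Real.mul_rpow hCε.le (hgnn k ω)
      rw [← ENNReal.ofReal_mul (Real.exp_nonneg _), ← ENNReal.ofReal_mul hc1nn,
        ← ENNReal.ofReal_mul hCp.le,
        ← ENNReal.ofReal_add
          (mul_nonneg hc1nn (mul_nonneg (Real.exp_nonneg _) (Real.rpow_nonneg (hhnn k ω) _)))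
          (mul_nonneg hCp.le (Real.rpow_nonneg (hgnn k ω) _))]
      apply ENNReal.ofReal_le_ofReal
      rw [eA, eB] at e2
      refine e1.trans (e2.trans (le_of_eq ?_))
      rw [hCpdef]; ring
    have hindE : IndepFun (fun ω => ENNReal.ofReal (Real.exp (-c * t k ω)))
        (fun ω => ENNReal.ofReal (h k ω ^ p)) μ :=
      (hth k).comp (by fun_prop : Measurable fun x : ℝ => ENNReal.ofReal (Real.exp (-c * x)))
        (by fun_prop : Measurable fun x : ℝ => ENNReal.ofReal (x ^ p))
    calc H (k + 1) ≤ ∫⁻ ω, (ENNReal.ofReal (τ ^ (1 - p) * (1 + ε) ^ p) *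
          (ENNReal.ofReal (Real.exp (-c * t k ω)) * ENNReal.ofReal (h k ω ^ p))
          + ENNReal.ofReal Cp * ENNReal.ofReal (g k ω ^ p)) ∂μ := lintegral_mono_ae hae
      _ = ENNReal.ofReal (τ ^ (1 - p) * (1 + ε) ^ p) *
            ∫⁻ ω, ENNReal.ofReal (Real.exp (-c * t k ω)) * ENNReal.ofReal (h k ω ^ p) ∂μ
          + ENNReal.ofReal Cp * ∫⁻ ω, ENNReal.ofReal (g k ω ^ p) ∂μ := by
        rw [lintegral_add_left (show Measurable fun ω => ENNReal.ofReal (τ ^ (1 - p) * (1 + ε) ^ p) * (ENNReal.ofReal (Real.exp (-c * t k ω)) * ENNReal.ofReal (h k ω ^ p)) from ((mE k).mul (mHp k)).const_mul _),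
          lintegral_const_mul _ (show Measurable fun ω => ENNReal.ofReal (Real.exp (-c * t k ω)) * ENNReal.ofReal (h k ω ^ p) from (mE k).mul (mHp k)), lintegral_const_mul _ (mGp k)]
      _ = ENNReal.ofReal (τ ^ (1 - p) * (1 + ε) ^ p) * (ENNReal.ofReal rr * H k)
          + ENNReal.ofReal Cp * G := by
        rw [lintegral_mul_eq_lintegral_mul_lintegral_of_indepFun'' (mE k).aemeasurable (mHp k).aemeasurable hindE,
          hEint k, hGint k]
      _ = ENNReal.ofReal γ * H k + ENNReal.ofReal Cp * G := by
        rw [← mul_assoc, ← ENNReal.ofReal_mul hc1nn, key]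
  -- induction
  have hind : ∀ k, H k ≤ ENNReal.ofReal γ ^ k * H 0 +
      (∑ j ∈ Finset.range k, ENNReal.ofReal γ ^ j) * (ENNReal.ofReal Cp * G) := by
    intro k
    induction k with
    | zero => simp
    | succ n ih =>
      calc H (n + 1) ≤ ENNReal.ofReal γ * H n + ENNReal.ofReal Cp * G := hstep n
        _ ≤ ENNReal.ofReal γ * (ENNReal.ofReal γ ^ n * H 0 +
              (∑ j ∈ Finset.range n, ENNReal.ofReal γ ^ j) * (ENNReal.ofReal Cp * G))
            + ENNReal.ofReal Cp * G :=
          add_le_add_left (mul_le_mul_right ih _) _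
        _ = ENNReal.ofReal γ ^ (n + 1) * H 0 +
            (∑ j ∈ Finset.range (n + 1), ENNReal.ofReal γ ^ j) * (ENNReal.ofReal Cp * G) := by
          rw [geom_sum_succ]
          ring
  refine ⟨γ, hγ0, hγ1, Cp, hCp, fun k => (hind k).trans ?_⟩
  have h1 : ENNReal.ofReal γ ^ k = ENNReal.ofReal (γ ^ k) := (ENNReal.ofReal_pow hγ0.le k).symm
  have h2 : (∑ j ∈ Finset.range k, ENNReal.ofReal γ ^ j) * ENNReal.ofReal Cp
      ≤ ENNReal.ofReal (Cp / (1 - γ)) := by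
    have hsum : (∑ j ∈ Finset.range k, ENNReal.ofReal γ ^ j) ≤ (1 - ENNReal.ofReal γ)⁻¹ := by
      rw [← ENNReal.tsum_geometric]
      exact ENNReal.sum_le_tsum _
    have h3 : (1 : ℝ≥0∞) - ENNReal.ofReal γ = ENNReal.ofReal (1 - γ) := by
      rw [ENNReal.ofReal_sub _ hγ0.le, ENNReal.ofReal_one]
    calc (∑ j ∈ Finset.range k, ENNReal.ofReal γ ^ j) * ENNReal.ofReal Cp
        ≤ (1 - ENNReal.ofReal γ)⁻¹ * ENNReal.ofReal Cp := mul_le_mul_left hsum _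
      _ = ENNReal.ofReal ((1 - γ)⁻¹) * ENNReal.ofReal Cp := by
        rw [h3, ← ENNReal.ofReal_inv_of_pos (by linarith)]
      _ = ENNReal.ofReal ((1 - γ)⁻¹ * Cp) :=
        (ENNReal.ofReal_mul (inv_nonneg.mpr (by linarith))).symm
      _ = ENNReal.ofReal (Cp / (1 - γ)) := by rw [div_eq_inv_mul]
  rw [h1]
  refine add_le_add_right ?_ _
  calc (∑ j ∈ Finset.range k, ENNReal.ofReal γ ^ j) * (ENNReal.ofReal Cp * G)
      = ((∑ j ∈ Finset.range k, ENNReal.ofReal γ ^ j) * ENNReal.ofReal Cp) * G := by ring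
    _ ≤ ENNReal.ofReal (Cp / (1 - γ)) * G := mul_le_mul_left h2 _
end

section
/- Let (M_k)_{k≥0} be a real-valued martingale with respect to a filtration (F_k)_{k≥0}, with M_0 = 0, and let p ≥ 1 be a real number. If there is a constant K > 0 such that E|M_i − M_{i−1}|^{2p} ≤ K for all i ≥ 1, then there is a constant C > 0, depending only on p, such that E|M_k|^{2p} ≤ C K k^p for all k ≥ 1. -/
open MeasureTheory Filter Set


lemma sq_rpow_half (u r : ℝ) : (u ^ 2 : ℝ) ^ (r / 2) = |u| ^ r := by
  rw [← sq_abs, ← Real.rpow_natCast |u| 2, ← Real.rpow_mul (abs_nonneg u)]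
  congr 1; push_cast; ring

lemma bk_deriv1 {q : ℝ} (hq : 2 ≤ q) (x : ℝ) :
    HasDerivAt (fun u : ℝ => |u| ^ q) (q * x * |x| ^ (q - 2)) x := by
  have h1 : (fun u : ℝ => |u| ^ q) = fun u : ℝ => (u ^ 2 : ℝ) ^ (q / 2) := by
    funext u; rw [sq_rpow_half]
  rw [h1]
  have h2 : HasDerivAt (fun u : ℝ => u ^ 2) (2 * x) x := by
    simpa using hasDerivAt_pow 2 x
  have h3 := h2.rpow_const (p := q / 2) (Or.inr (by linarith))
  convert h3 using 1
  rw [show q / 2 - 1 = (q - 2) / 2 by ring, sq_rpow_half]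
  ring

lemma bk_deriv2 {q : ℝ} (hq : 2 ≤ q) (x : ℝ) :
    HasDerivAt (fun u : ℝ => q * u * |u| ^ (q - 2)) (q * (q - 1) * |x| ^ (q - 2)) x := by
  rcases eq_or_lt_of_le hq with hq2 | hq2
  · subst hq2
    norm_num [Real.rpow_zero]
    simpa using (hasDerivAt_id x).const_mul (2:ℝ)
  rcases eq_or_ne x 0 with rfl | hx
  · have hpos : 0 < q - 2 := by linarith
    have hqpos : (0:ℝ) < q := by linarith
    have h0 : |(0:ℝ)| ^ (q - 2) = 0 := by
      rw [abs_zero, Real.zero_rpow (ne_of_gt hpos)]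
    rw [hasDerivAt_iff_isLittleO]
    simp only [h0, mul_zero, zero_mul, sub_zero, smul_zero, smul_eq_mul]
    rw [Asymptotics.isLittleO_iff]
    intro c hc
    have htend : Tendsto (fun u : ℝ => q * |u| ^ (q - 2)) (nhds 0) (nhds 0) := by
      have habs : Tendsto (fun u : ℝ => |u|) (nhds (0:ℝ)) (nhds (0:ℝ)) := by
        simpa using continuous_abs.tendsto (0:ℝ)
      have hr := (Real.continuousAt_rpow_const 0 (q - 2) (Or.inr hpos.le)).tendsto
      have := hr.comp habs
      rw [Real.zero_rpow (ne_of_gt hpos)] at this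
      simpa using this.const_mul q
    have hev : ∀ᶠ u in nhds (0:ℝ), q * |u| ^ (q - 2) < c := htend.eventually_lt_const hc
    filter_upwards [hev] with u hu
    have hnorm : ‖q * u * |u| ^ (q - 2)‖ = q * |u| ^ (q - 2) * |u| := by
      rw [Real.norm_eq_abs, abs_mul, abs_mul, abs_of_pos hqpos,
        abs_of_nonneg (Real.rpow_nonneg (abs_nonneg u) _)]; ring
    calc ‖q * u * |u| ^ (q - 2)‖ = q * |u| ^ (q - 2) * |u| := hnorm
      _ ≤ c * |u| := mul_le_mul_of_nonneg_right hu.le (abs_nonneg u)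
      _ = c * ‖u‖ := by rw [Real.norm_eq_abs]
  · have h1 : (fun u : ℝ => q * u * |u| ^ (q - 2)) =
        fun u : ℝ => q * (id u * (u ^ 2) ^ ((q - 2)/2)) := by
      funext u; rw [sq_rpow_half]; simp [id]; ring
    rw [h1]
    have h2 : HasDerivAt (fun u : ℝ => u ^ 2) (2 * x) x := by
      simpa using hasDerivAt_pow 2 x
    have hx2 : (x ^ 2 : ℝ) ≠ 0 := pow_ne_zero _ hx
    have h3 := h2.rpow_const (p := (q - 2)/2) (Or.inl hx2)
    have h5 := ((hasDerivAt_id x).mul h3).const_mul q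
    convert h5 using 1
    · rfl
    · rfl
    · rfl
    have e1 : (x ^ 2 : ℝ) ^ ((q-2)/2) = |x| ^ (q - 2) := sq_rpow_half x _
    have e2 : (x ^ 2 : ℝ) ^ ((q-2)/2 - 1) * x ^ 2 = |x| ^ (q - 2) := by
      calc (x ^ 2 : ℝ) ^ ((q-2)/2 - 1) * x ^ 2
          = (x ^ 2 : ℝ) ^ ((q-2)/2 - 1) * (x ^ 2 : ℝ) ^ (1:ℝ) := by rw [Real.rpow_one]
        _ = (x ^ 2 : ℝ) ^ ((q-2)/2 - 1 + 1) := (Real.rpow_add (by positivity) _ _).symm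
        _ = |x| ^ (q - 2) := by rw [show (q-2)/2 - 1 + 1 = (q-2)/2 by ring, e1]
    simp only [id_eq, one_mul]
    rw [show x * (2 * x * ((q - 2) / 2) * (x ^ 2) ^ ((q - 2) / 2 - 1)) =
      (q - 2) * ((x ^ 2) ^ ((q - 2) / 2 - 1) * x ^ 2) from by ring, e2, e1]
    ring



lemma bk_lip {q : ℝ} (hq : 2 ≤ q) {R a b : ℝ} (ha : |a| ≤ R) (hb : |b| ≤ R) :
    |q * a * |a| ^ (q - 2) - q * b * |b| ^ (q - 2)| ≤ q * (q - 1) * R ^ (q - 2) * |a - b| := by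
  have hconv : Convex ℝ (Icc (-R) R) := convex_Icc _ _
  have hd : ∀ x ∈ Icc (-R) R, HasDerivWithinAt (fun u : ℝ => q * u * |u| ^ (q - 2))
      (q * (q - 1) * |x| ^ (q - 2)) (Icc (-R) R) x :=
    fun x _ => (bk_deriv2 hq x).hasDerivWithinAt
  have hR : 0 ≤ R := le_trans (abs_nonneg a) ha
  have hbound : ∀ x ∈ Icc (-R) R, ‖q * (q - 1) * |x| ^ (q - 2)‖ ≤ q * (q - 1) * R ^ (q - 2) := by
    intro x hx
    have hxR : |x| ≤ R := abs_le.2 hx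
    have h1 : |x| ^ (q - 2) ≤ R ^ (q - 2) :=
      Real.rpow_le_rpow (abs_nonneg x) hxR (by linarith)
    have h2 : (0:ℝ) ≤ q * (q - 1) * |x| ^ (q - 2) :=
      mul_nonneg (mul_nonneg (by linarith) (by linarith)) (Real.rpow_nonneg (abs_nonneg x) _)
    rw [Real.norm_eq_abs, abs_of_nonneg h2]
    exact mul_le_mul_of_nonneg_left h1 (mul_nonneg (by linarith) (by linarith))
  have := hconv.norm_image_sub_le_of_norm_hasDerivWithin_le hd hbound
    (abs_le.1 hb) (abs_le.1 ha)
  simpa [Real.norm_eq_abs] using this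

lemma bk_ptwise {q : ℝ} (hq : 2 ≤ q) (x y : ℝ) :
    |x + y| ^ q ≤ |x| ^ q + q * x * |x| ^ (q - 2) * y
      + q * (q - 1) * 2 ^ q * (|x| ^ (q - 2) * y ^ 2 + |y| ^ q) := by
  have hq0 : (0:ℝ) < q := by linarith
  rcases eq_or_ne y 0 with rfl | hy
  · simp [Real.zero_rpow (ne_of_gt hq0)]
  -- MVT : ∃ c between x and x+y with φ(x+y) - φ(x) = D c * y
  obtain ⟨c, hc1, hc2⟩ : ∃ c : ℝ, |c - x| ≤ |y| ∧
      |x + y| ^ q - |x| ^ q = q * c * |c| ^ (q - 2) * y := by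
    rcases lt_or_gt_of_ne hy with hneg | hpos
    · have hab : x + y < x := by linarith
      obtain ⟨c, hc, hslope⟩ := exists_hasDerivAt_eq_slope (fun u : ℝ => |u| ^ q)
        (fun u => q * u * |u| ^ (q - 2)) hab
        (fun u _ => ((bk_deriv1 hq u).continuousAt.continuousWithinAt))
        (fun u _ => bk_deriv1 hq u)
      refine ⟨c, ?_, ?_⟩
      · rw [abs_sub_le_iff]; constructor <;> [skip; skip] <;>
          · have := hc.1; have := hc.2; rw [abs_of_neg hneg]; linarith
      · have : q * c * |c| ^ (q - 2) * (x - (x + y)) = |x| ^ q - |x + y| ^ q := by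
          rw [hslope]; exact div_mul_cancel₀ _ (sub_ne_zero.mpr hab.ne')
        nlinarith [this]
    · have hab : x < x + y := by linarith
      obtain ⟨c, hc, hslope⟩ := exists_hasDerivAt_eq_slope (fun u : ℝ => |u| ^ q)
        (fun u => q * u * |u| ^ (q - 2)) hab
        (fun u _ => ((bk_deriv1 hq u).continuousAt.continuousWithinAt))
        (fun u _ => bk_deriv1 hq u)
      refine ⟨c, ?_, ?_⟩
      · rw [abs_sub_le_iff]; constructor <;>
          · have := hc.1; have := hc.2; rw [abs_of_pos hpos]; linarith
      · have : q * c * |c| ^ (q - 2) * ((x + y) - x) = |x + y| ^ q - |x| ^ q := by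
          rw [hslope]; exact div_mul_cancel₀ _ (sub_ne_zero.mpr hab.ne')
        nlinarith [this]
  -- Lipschitz bound with R = |x| + |y|
  have hcR : |c| ≤ |x| + |y| := by
    have := abs_sub_abs_le_abs_sub c x
    linarith [hc1, abs_nonneg x]
  have hxR : |x| ≤ |x| + |y| := by linarith [abs_nonneg y]
  have hlip := bk_lip hq hcR hxR
  have key : |x + y| ^ q - |x| ^ q - q * x * |x| ^ (q - 2) * y ≤
      q * (q - 1) * (|x| + |y|) ^ (q - 2) * y ^ 2 := by
    have h1 : |x + y| ^ q - |x| ^ q - q * x * |x| ^ (q - 2) * y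
        = (q * c * |c| ^ (q - 2) - q * x * |x| ^ (q - 2)) * y := by rw [hc2]; ring
    have h2 : (q * c * |c| ^ (q - 2) - q * x * |x| ^ (q - 2)) * y
        ≤ |q * c * |c| ^ (q - 2) - q * x * |x| ^ (q - 2)| * |y| := by
      calc _ ≤ |(q * c * |c| ^ (q - 2) - q * x * |x| ^ (q - 2)) * y| := le_abs_self _
        _ = _ := abs_mul _ _
    have h3 : |q * c * |c| ^ (q - 2) - q * x * |x| ^ (q - 2)| * |y|
        ≤ q * (q - 1) * (|x| + |y|) ^ (q - 2) * (|c - x| * |y|) := by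
      have := mul_le_mul_of_nonneg_right hlip (abs_nonneg y)
      calc |q * c * |c| ^ (q - 2) - q * x * |x| ^ (q - 2)| * |y|
          ≤ q * (q - 1) * (|x| + |y|) ^ (q - 2) * |c - x| * |y| := this
        _ = q * (q - 1) * (|x| + |y|) ^ (q - 2) * (|c - x| * |y|) := by ring
    have h4 : |c - x| * |y| ≤ y ^ 2 := by
      have : |c - x| * |y| ≤ |y| * |y| := mul_le_mul_of_nonneg_right hc1 (abs_nonneg y)
      calc |c - x| * |y| ≤ |y| * |y| := this
        _ = y ^ 2 := by rw [← abs_mul, ← sq, abs_of_nonneg (sq_nonneg y)]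
    have h5 : (0:ℝ) ≤ q * (q - 1) * (|x| + |y|) ^ (q - 2) :=
      mul_nonneg (mul_nonneg (by linarith) (by linarith))
        (Real.rpow_nonneg (by positivity) _)
    calc |x + y| ^ q - |x| ^ q - q * x * |x| ^ (q - 2) * y
        = (q * c * |c| ^ (q - 2) - q * x * |x| ^ (q - 2)) * y := h1
      _ ≤ |q * c * |c| ^ (q - 2) - q * x * |x| ^ (q - 2)| * |y| := h2
      _ ≤ q * (q - 1) * (|x| + |y|) ^ (q - 2) * (|c - x| * |y|) := h3
      _ ≤ q * (q - 1) * (|x| + |y|) ^ (q - 2) * y ^ 2 := mul_le_mul_of_nonneg_left h4 h5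
  -- (|x|+|y|)^(q-2) ≤ 2^q * (|x|^(q-2) + |y|^(q-2))
  have hsplit : (|x| + |y|) ^ (q - 2) ≤ 2 ^ q * (|x| ^ (q - 2) + |y| ^ (q - 2)) := by
    have hmax : |x| + |y| ≤ 2 * max |x| |y| := by
      rcases le_total |x| |y| with h | h
      · rw [max_eq_right h]; linarith
      · rw [max_eq_left h]; linarith
    have h1 : (|x| + |y|) ^ (q - 2) ≤ (2 * max |x| |y|) ^ (q - 2) :=
      Real.rpow_le_rpow (by positivity) hmax (by linarith)
    have h2 : (2 * max |x| |y|) ^ (q - 2) = 2 ^ (q - 2) * (max |x| |y|) ^ (q - 2) :=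
      Real.mul_rpow (by norm_num) (le_max_of_le_left (abs_nonneg x))
    have h3 : (max |x| |y|) ^ (q - 2) ≤ |x| ^ (q - 2) + |y| ^ (q - 2) := by
      rcases le_total |x| |y| with h | h
      · rw [max_eq_right h]
        have := Real.rpow_nonneg (abs_nonneg x) (q - 2); linarith
      · rw [max_eq_left h]
        have := Real.rpow_nonneg (abs_nonneg y) (q - 2); linarith
    have h4 : (2:ℝ) ^ (q - 2) ≤ 2 ^ q :=
      Real.rpow_le_rpow_of_exponent_le one_le_two (by linarith)
    have h5 : (0:ℝ) ≤ (max |x| |y|) ^ (q - 2) :=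
      Real.rpow_nonneg (le_max_of_le_left (abs_nonneg x)) _
    have h6 : (0:ℝ) < (2:ℝ) ^ (q - 2) := Real.rpow_pos_of_pos (by norm_num) _
    calc (|x| + |y|) ^ (q - 2) ≤ 2 ^ (q - 2) * (max |x| |y|) ^ (q - 2) := by rw [← h2]; exact h1
      _ ≤ 2 ^ q * (max |x| |y|) ^ (q - 2) := mul_le_mul_of_nonneg_right h4 h5
      _ ≤ 2 ^ q * (|x| ^ (q - 2) + |y| ^ (q - 2)) := by
          apply mul_le_mul_of_nonneg_left h3 (le_of_lt (Real.rpow_pos_of_pos two_pos q))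
  have hyq : |y| ^ (q - 2) * y ^ 2 = |y| ^ q := by
    rw [← sq_abs y, ← Real.rpow_natCast |y| 2,
      ← Real.rpow_add' (abs_nonneg y) (by push_cast; linarith)]
    congr 1; push_cast; ring
  have h6 : q * (q - 1) * (|x| + |y|) ^ (q - 2) * y ^ 2 ≤
      q * (q - 1) * (2 ^ q * (|x| ^ (q - 2) + |y| ^ (q - 2))) * y ^ 2 := by
    apply mul_le_mul_of_nonneg_right _ (sq_nonneg y)
    exact mul_le_mul_of_nonneg_left hsplit (mul_nonneg (by linarith) (by linarith))
  have h7 : q * (q - 1) * (2 ^ q * (|x| ^ (q - 2) + |y| ^ (q - 2))) * y ^ 2 =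
      q * (q - 1) * 2 ^ q * (|x| ^ (q - 2) * y ^ 2 + |y| ^ q) := by
    rw [← hyq]; ring
  linarith [key, h6, h7.le, h7.ge]



variable {Ω : Type} {m : MeasurableSpace Ω} {μ : Measure Ω}

-- conversions
lemma bk_ofReal_rpow (x : ℝ) {q : ℝ} (hq : 0 ≤ q) :
    ENNReal.ofReal (|x| ^ q) = (‖x‖₊ : ENNReal) ^ q := by
  rw [← ENNReal.ofReal_rpow_of_nonneg (abs_nonneg x) hq]
  congr 1
  rw [← Real.norm_eq_abs, ofReal_norm, enorm_eq_nnnorm]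

lemma bk_memLp {q : ℝ} (hq : 1 ≤ q) {f : Ω → ℝ} (hf : AEStronglyMeasurable f μ)
    (hfin : ∫⁻ ω, ENNReal.ofReal (|f ω| ^ q) ∂μ ≠ ⊤) :
    MemLp f (ENNReal.ofReal q) μ := by
  have hq0 : 0 < q := by linarith
  refine ⟨hf, ?_⟩
  rw [eLpNorm_eq_lintegral_rpow_enorm_toReal (by simp [hq0]) (by simp)]
  rw [ENNReal.toReal_ofReal hq0.le]
  have : ∀ ω, ((‖f ω‖₊ : ENNReal)) ^ q = ENNReal.ofReal (|f ω| ^ q) := fun ω =>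
    (bk_ofReal_rpow _ hq0.le).symm
  simp_rw [enorm_eq_nnnorm, this]
  exact ENNReal.rpow_lt_top_of_nonneg (by positivity) hfin

lemma bk_integrable_rpow {q : ℝ} (hq : 1 ≤ q) {f : Ω → ℝ}
    (hf : MemLp f (ENNReal.ofReal q) μ) :
    Integrable (fun ω => |f ω| ^ q) μ := by
  have hq0 : 0 < q := by linarith
  have := hf.integrable_norm_rpow (by simp [hq0]) (by simp)
  rw [ENNReal.toReal_ofReal hq0.le] at this
  simpa [Real.norm_eq_abs] using this

lemma bk_lintegral_eq {q : ℝ} (hq : 1 ≤ q) {f : Ω → ℝ}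
    (hf : MemLp f (ENNReal.ofReal q) μ) :
    ∫⁻ ω, ENNReal.ofReal (|f ω| ^ q) ∂μ = ENNReal.ofReal (∫ ω, |f ω| ^ q ∂μ) :=
  (ofReal_integral_eq_lintegral_ofReal (bk_integrable_rpow hq hf)
    (Filter.Eventually.of_forall fun ω => Real.rpow_nonneg (abs_nonneg _) q)).symm

-- helper
lemma bk_rpow_split {a : ℝ} (ha : 0 ≤ a) {r s : ℝ} (hrs : r + s ≠ 0) :
    a ^ (r + s) = a ^ r * a ^ s := Real.rpow_add' ha hrs

lemma bk_abs_sq (y : ℝ) : y ^ 2 = |y| ^ (2:ℝ) := by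
  rw [← sq_abs, ← Real.rpow_natCast |y| 2]; norm_num

lemma bk_young1 {q : ℝ} (hq : 2 ≤ q) (x y : ℝ) :
    |x| ^ (q - 1) * |y| ≤ |x| ^ q + |y| ^ q := by
  have hxq := Real.rpow_nonneg (abs_nonneg x) q
  have hyq := Real.rpow_nonneg (abs_nonneg y) q
  rcases le_total |x| |y| with h | h
  · have h1 : |x| ^ (q - 1) * |y| ≤ |y| ^ (q - 1) * |y| :=
      mul_le_mul_of_nonneg_right (Real.rpow_le_rpow (abs_nonneg x) h (by linarith)) (abs_nonneg y)
    have h2 : |y| ^ (q - 1) * |y| = |y| ^ q := by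
      have h3 := bk_rpow_split (abs_nonneg y) (by linarith : q - 1 + 1 ≠ 0)
      rw [Real.rpow_one] at h3
      rw [← h3]; congr 1; ring
    linarith [h1, h2.le, h2.ge]
  · have h1 : |x| ^ (q - 1) * |y| ≤ |x| ^ (q - 1) * |x| :=
      mul_le_mul_of_nonneg_left h (Real.rpow_nonneg (abs_nonneg x) _)
    have h2 : |x| ^ (q - 1) * |x| = |x| ^ q := by
      have h3 := bk_rpow_split (abs_nonneg x) (by linarith : q - 1 + 1 ≠ 0)
      rw [Real.rpow_one] at h3
      rw [← h3]; congr 1; ring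
    linarith [h1, h2.le, h2.ge]

lemma bk_young2 {q : ℝ} (hq : 2 ≤ q) (x y : ℝ) :
    |x| ^ (q - 2) * y ^ 2 ≤ |x| ^ q + |y| ^ q := by
  have hxq := Real.rpow_nonneg (abs_nonneg x) q
  have hyq := Real.rpow_nonneg (abs_nonneg y) q
  rw [bk_abs_sq]
  rcases le_total |x| |y| with h | h
  · have h1 : |x| ^ (q - 2) * |y| ^ (2:ℝ) ≤ |y| ^ (q - 2) * |y| ^ (2:ℝ) :=
      mul_le_mul_of_nonneg_right (Real.rpow_le_rpow (abs_nonneg x) h (by linarith))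
        (Real.rpow_nonneg (abs_nonneg y) _)
    have h2 : |y| ^ (q - 2) * |y| ^ (2:ℝ) = |y| ^ q := by
      rw [← bk_rpow_split (abs_nonneg y) (by linarith : q - 2 + 2 ≠ 0)]; congr 1; ring
    linarith [h1, h2.le, h2.ge]
  · have h1 : |x| ^ (q - 2) * |y| ^ (2:ℝ) ≤ |x| ^ (q - 2) * |x| ^ (2:ℝ) :=
      mul_le_mul_of_nonneg_left (Real.rpow_le_rpow (abs_nonneg y) h (by norm_num))
        (Real.rpow_nonneg (abs_nonneg x) _)
    have h2 : |x| ^ (q - 2) * |x| ^ (2:ℝ) = |x| ^ q := by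
      rw [← bk_rpow_split (abs_nonneg x) (by linarith : q - 2 + 2 ≠ 0)]; congr 1; ring
    linarith [h1, h2.le, h2.ge]

lemma bk_cont_rpow {c : ℝ} (hc : 0 ≤ c) : Continuous fun x : ℝ => |x| ^ c := by
  rw [continuous_iff_continuousAt]; intro x
  exact (Real.continuousAt_rpow_const |x| c (Or.inr hc)).comp continuous_abs.continuousAt

lemma bk_abs_mul_rpow {q : ℝ} (hq : 2 ≤ q) (x : ℝ) : |x| * |x| ^ (q - 2) = |x| ^ (q - 1) := by
  have h := bk_rpow_split (abs_nonneg x) (show (1:ℝ) + (q - 2) ≠ 0 by linarith)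
  rw [Real.rpow_one] at h
  rw [← h]; congr 1; ring

lemma bk_step {p : ℝ} (hp : 1 ≤ p) [IsProbabilityMeasure μ]
    (ℱ : Filtration ℕ m) (M : ℕ → Ω → ℝ) (hM : Martingale M ℱ μ)
    {K : ℝ} (j : ℕ)
    (hj : MemLp (M j) (ENNReal.ofReal (2*p)) μ)
    (hj1 : MemLp (M (j+1)) (ENNReal.ofReal (2*p)) μ)
    (hd : ∫ ω, |M (j+1) ω - M j ω| ^ (2*p) ∂μ ≤ K) :
    ∫ ω, |M (j+1) ω| ^ (2*p) ∂μ ≤ ∫ ω, |M j ω| ^ (2*p) ∂μ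
      + (2*p) * (2*p - 1) * 2 ^ (2*p) *
        ((∫ ω, |M j ω| ^ (2*p) ∂μ) ^ (1 - 1/p) * K ^ (1/p) + K) := by
  set q := 2*p with hqdef
  have hq : 2 ≤ q := by simp [hqdef]; linarith
  have hq1 : 1 ≤ q := by linarith
  have hp0 : 0 < p := by linarith
  -- basic integrability / measurability
  have hdmem : MemLp (fun ω => M (j+1) ω - M j ω) (ENNReal.ofReal q) μ := hj1.sub hj
  have IA : Integrable (fun ω => |M j ω| ^ q) μ := bk_integrable_rpow hq1 hj
  have IA1 : Integrable (fun ω => |M (j+1) ω| ^ q) μ := bk_integrable_rpow hq1 hj1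
  have IB : Integrable (fun ω => |M (j+1) ω - M j ω| ^ q) μ := bk_integrable_rpow hq1 hdmem
  have hBnn : 0 ≤ ∫ ω, |M (j+1) ω - M j ω| ^ q ∂μ :=
    integral_nonneg fun ω => Real.rpow_nonneg (abs_nonneg _) _
  have hAnn : 0 ≤ ∫ ω, |M j ω| ^ q ∂μ :=
    integral_nonneg fun ω => Real.rpow_nonneg (abs_nonneg _) _
  have hMsm : StronglyMeasurable[ℱ j] (M j) := hM.stronglyAdapted j
  have hcontf : Continuous fun u : ℝ => q * u * |u| ^ (q - 2) :=
    ((continuous_const.mul continuous_id).mul (bk_cont_rpow (by linarith)))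
  have hfsm : StronglyMeasurable[ℱ j] (fun ω => q * M j ω * |M j ω| ^ (q - 2)) :=
    hcontf.comp_stronglyMeasurable hMsm
  have hMsm' : StronglyMeasurable[m] (M j) := hMsm.mono (ℱ.le j)
  have hM1sm' : StronglyMeasurable[m] (M (j+1)) := (hM.stronglyAdapted (j+1)).mono (ℱ.le (j+1))
  have hdsm' : StronglyMeasurable[m] (fun ω => M (j+1) ω - M j ω) := hM1sm'.sub hMsm'
  have hfsm' : StronglyMeasurable[m] (fun ω => q * M j ω * |M j ω| ^ (q - 2)) :=
    hfsm.mono (ℱ.le j)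
  have hdint : Integrable (fun ω => M (j+1) ω - M j ω) μ :=
    (hM.integrable (j+1)).sub (hM.integrable j)
  -- Integrability of cross term f * d
  have hfg : Integrable (fun ω => (q * M j ω * |M j ω| ^ (q - 2)) * (M (j+1) ω - M j ω)) μ := by
    refine Integrable.mono' ((IA.add IB).const_mul q) (hfsm'.mul hdsm').aestronglyMeasurable
      (Filter.Eventually.of_forall fun ω => ?_)
    have h1 : ‖(q * M j ω * |M j ω| ^ (q - 2)) * (M (j+1) ω - M j ω)‖
        = q * (|M j ω| ^ (q - 1) * |M (j+1) ω - M j ω|) := by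
      rw [Real.norm_eq_abs, abs_mul, abs_mul, abs_mul,
        abs_of_nonneg (show (0:ℝ) ≤ q by linarith),
        abs_of_nonneg (Real.rpow_nonneg (abs_nonneg _) _)]
      rw [show q * |M j ω| * |M j ω| ^ (q - 2) * |M (j+1) ω - M j ω|
          = q * ((|M j ω| * |M j ω| ^ (q - 2)) * |M (j+1) ω - M j ω|) from by ring,
        bk_abs_mul_rpow hq]
    rw [h1]
    have := bk_young1 hq (M j ω) (M (j+1) ω - M j ω)
    have hq0 : (0:ℝ) ≤ q := by linarith
    calc q * (|M j ω| ^ (q - 1) * |M (j+1) ω - M j ω|)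
        ≤ q * (|M j ω| ^ q + |M (j+1) ω - M j ω| ^ q) := mul_le_mul_of_nonneg_left this hq0
      _ = _ := rfl
  -- Integrability of quadratic term
  have hEd : Integrable (fun ω => |M j ω| ^ (q - 2) * (M (j+1) ω - M j ω) ^ 2) μ := by
    refine Integrable.mono' (IA.add IB)
      (((bk_cont_rpow (show (0:ℝ) ≤ q - 2 by linarith)).comp_stronglyMeasurable hMsm').mul
        ((continuous_pow 2).comp_stronglyMeasurable hdsm')).aestronglyMeasurable
      (Filter.Eventually.of_forall fun ω => ?_)
    have hnn : (0:ℝ) ≤ |M j ω| ^ (q - 2) * (M (j+1) ω - M j ω) ^ 2 :=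
      mul_nonneg (Real.rpow_nonneg (abs_nonneg _) _) (sq_nonneg _)
    rw [Real.norm_eq_abs, abs_of_nonneg hnn]
    exact bk_young2 hq (M j ω) (M (j+1) ω - M j ω)
  -- Step 1 : the linear term has zero integral
  have hcond0 : μ[(fun ω => M (j+1) ω - M j ω)|ℱ j] =ᵐ[μ] 0 := by
    have h1 : μ[M (j+1)|ℱ j] =ᵐ[μ] M j := hM.2 j (j+1) (Nat.le_succ j)
    have h2 : μ[M j|ℱ j] =ᵐ[μ] M j := hM.2 j j le_rfl
    have h3 : (fun ω => M (j+1) ω - M j ω) = M (j+1) - M j := rfl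
    rw [h3]
    have h4 := condExp_sub (μ := μ) (m := ℱ j) (hM.integrable (j+1)) (hM.integrable j)
    filter_upwards [h1, h2, h4] with ω e1 e2 e4
    simp only [Pi.sub_apply] at e4 ⊢
    rw [e4, e1, e2]; simp
  have hS1 : ∫ ω, (q * M j ω * |M j ω| ^ (q - 2)) * (M (j+1) ω - M j ω) ∂μ = 0 := by
    have hmul := condExp_mul_of_stronglyMeasurable_left (μ := μ) hfsm
      (by exact hfg) (by exact hdint)
    have hzero : (fun ω => q * M j ω * |M j ω| ^ (q - 2)) *
        μ[(fun ω => M (j+1) ω - M j ω)|ℱ j] =ᵐ[μ] 0 := by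
      filter_upwards [hcond0] with ω e
      simp only [Pi.mul_apply, Pi.zero_apply, e]; ring
    have heq : ∫ ω, (q * M j ω * |M j ω| ^ (q - 2)) * (M (j+1) ω - M j ω) ∂μ
        = ∫ ω, (μ[(fun ω => q * M j ω * |M j ω| ^ (q - 2)) *
            (fun ω => M (j+1) ω - M j ω)|ℱ j]) ω ∂μ :=
      (integral_condExp (ℱ.le j)).symm
    rw [heq, integral_congr_ae (hmul.trans hzero)]
    simp
  -- Step 2 : Hölder bound for the quadratic term
  have hKnn : 0 ≤ K := le_trans hBnn hd
  have hS2 : ∫ ω, |M j ω| ^ (q - 2) * (M (j+1) ω - M j ω) ^ 2 ∂μ ≤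
      (∫ ω, |M j ω| ^ q ∂μ) ^ (1 - 1/p) * K ^ (1/p) := by
    rcases eq_or_lt_of_le hp with hp1 | hp1
    · have hq2 : q - 2 = 0 := by rw [hqdef, ← hp1]; ring
      have h1p : 1 - 1/p = 0 := by rw [← hp1]; norm_num
      have h1p' : 1/p = 1 := by rw [← hp1]; norm_num
      rw [h1p, h1p', Real.rpow_zero, Real.rpow_one, one_mul]
      simp only [hq2, Real.rpow_zero, one_mul]
      have he : ∀ ω, (M (j+1) ω - M j ω) ^ 2 = |M (j+1) ω - M j ω| ^ q := by
        intro ω; rw [bk_abs_sq]; congr 1; rw [hqdef, ← hp1]; norm_num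
      calc ∫ ω, (M (j+1) ω - M j ω) ^ 2 ∂μ
          = ∫ ω, |M (j+1) ω - M j ω| ^ q ∂μ := integral_congr_ae (.of_forall he)
        _ ≤ K := hd
    · set r := p/(p-1) with hrdef
      have hp1' : 0 < p - 1 := by linarith
      have hpq : r.HolderConjugate p := (Real.HolderConjugate.conjExponent hp1).symm
      have hfnn : 0 ≤ᵐ[μ] fun ω => |M j ω| ^ (q - 2) :=
        .of_forall fun ω => Real.rpow_nonneg (abs_nonneg _) _
      have hgnn : 0 ≤ᵐ[μ] fun ω => (M (j+1) ω - M j ω) ^ 2 := .of_forall fun ω => sq_nonneg _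
      have hq2pos : (0:ℝ) < q - 2 := by rw [hqdef]; linarith
      have hfmem : MemLp (fun ω => |M j ω| ^ (q - 2)) (ENNReal.ofReal r) μ := by
        have h := hj.norm_rpow_div (ENNReal.ofReal (q - 2))
        have ht : (ENNReal.ofReal (q - 2)).toReal = q - 2 := ENNReal.toReal_ofReal (by linarith)
        have hdiv : ENNReal.ofReal q / ENNReal.ofReal (q - 2) = ENNReal.ofReal r := by
          rw [← ENNReal.ofReal_div_of_pos hq2pos]
          congr 1; rw [hqdef, hrdef]; field_simp
        rw [ht, hdiv] at h
        simpa [Real.norm_eq_abs] using h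
      have hgmem : MemLp (fun ω => (M (j+1) ω - M j ω) ^ 2) (ENNReal.ofReal p) μ := by
        have h := hdmem.norm_rpow_div (ENNReal.ofReal 2)
        have ht : (ENNReal.ofReal (2:ℝ)).toReal = 2 := ENNReal.toReal_ofReal (by norm_num)
        have hdiv : ENNReal.ofReal q / ENNReal.ofReal 2 = ENNReal.ofReal p := by
          rw [← ENNReal.ofReal_div_of_pos (by norm_num : (0:ℝ) < 2)]
          congr 1; rw [hqdef]; ring
        rw [ht, hdiv] at h
        have hfun : (fun ω => (M (j+1) ω - M j ω) ^ 2) =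
            fun ω => ‖M (j+1) ω - M j ω‖ ^ (2:ℝ) :=
          funext fun ω => by rw [Real.norm_eq_abs, ← bk_abs_sq]
        rw [hfun]; exact h
      have hH := integral_mul_le_Lp_mul_Lq_of_nonneg hpq hfnn hgnn hfmem hgmem
      have e1 : ∫ ω, (|M j ω| ^ (q - 2)) ^ r ∂μ = ∫ ω, |M j ω| ^ q ∂μ := by
        apply integral_congr_ae; apply Filter.Eventually.of_forall; intro ω
        show (|M j ω| ^ (q - 2)) ^ r = |M j ω| ^ q
        rw [← Real.rpow_mul (abs_nonneg _)]
        congr 1; rw [hqdef, hrdef]; field_simp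
      have e2 : ∫ ω, ((M (j+1) ω - M j ω) ^ 2) ^ p ∂μ
          = ∫ ω, |M (j+1) ω - M j ω| ^ q ∂μ := by
        apply integral_congr_ae; apply Filter.Eventually.of_forall; intro ω
        show ((M (j+1) ω - M j ω) ^ 2) ^ p = |M (j+1) ω - M j ω| ^ q
        rw [bk_abs_sq, ← Real.rpow_mul (abs_nonneg _)]
      have e3 : 1/r = 1 - 1/p := by rw [hrdef]; field_simp
      rw [e1, e2, e3] at hH
      calc ∫ ω, |M j ω| ^ (q - 2) * (M (j+1) ω - M j ω) ^ 2 ∂μ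
          ≤ (∫ ω, |M j ω| ^ q ∂μ) ^ (1 - 1/p) *
            (∫ ω, |M (j+1) ω - M j ω| ^ q ∂μ) ^ (1/p) := hH
        _ ≤ (∫ ω, |M j ω| ^ q ∂μ) ^ (1 - 1/p) * K ^ (1/p) :=
            mul_le_mul_of_nonneg_left (Real.rpow_le_rpow hBnn hd (by positivity))
              (Real.rpow_nonneg hAnn _)
  -- Step 3 : combine
  have hCqnn : (0:ℝ) ≤ q * (q-1) * 2 ^ q :=
    mul_nonneg (mul_nonneg (by linarith) (by linarith)) (Real.rpow_nonneg (by norm_num) _)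
  have hpt : ∀ ω, |M (j+1) ω| ^ q ≤ |M j ω| ^ q
      + (q * M j ω * |M j ω| ^ (q - 2)) * (M (j+1) ω - M j ω)
      + q * (q-1) * 2 ^ q *
        (|M j ω| ^ (q - 2) * (M (j+1) ω - M j ω) ^ 2 + |M (j+1) ω - M j ω| ^ q) := by
    intro ω
    have h := bk_ptwise hq (M j ω) (M (j+1) ω - M j ω)
    rw [show M j ω + (M (j+1) ω - M j ω) = M (j+1) ω from by ring] at h
    linarith [h]
  have hRHSint : Integrable (fun ω => |M j ω| ^ q
      + (q * M j ω * |M j ω| ^ (q - 2)) * (M (j+1) ω - M j ω)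
      + q * (q-1) * 2 ^ q *
        (|M j ω| ^ (q - 2) * (M (j+1) ω - M j ω) ^ 2 + |M (j+1) ω - M j ω| ^ q)) μ :=
    (IA.add hfg).add ((hEd.add IB).const_mul _)
  have hmono := integral_mono IA1 hRHSint hpt
  have hsplit1 : ∫ ω, (|M j ω| ^ q
      + (q * M j ω * |M j ω| ^ (q - 2)) * (M (j+1) ω - M j ω)
      + q * (q-1) * 2 ^ q *
        (|M j ω| ^ (q - 2) * (M (j+1) ω - M j ω) ^ 2 + |M (j+1) ω - M j ω| ^ q)) ∂μ
      = (∫ ω, |M j ω| ^ q ∂μ)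
        + (∫ ω, (q * M j ω * |M j ω| ^ (q - 2)) * (M (j+1) ω - M j ω) ∂μ)
        + q * (q-1) * 2 ^ q *
          ((∫ ω, |M j ω| ^ (q - 2) * (M (j+1) ω - M j ω) ^ 2 ∂μ)
            + ∫ ω, |M (j+1) ω - M j ω| ^ q ∂μ) := by
    rw [integral_add
        (f := fun ω => |M j ω| ^ q + (q * M j ω * |M j ω| ^ (q - 2)) * (M (j+1) ω - M j ω))
        (g := fun ω => q * (q-1) * 2 ^ q *
          (|M j ω| ^ (q - 2) * (M (j+1) ω - M j ω) ^ 2 + |M (j+1) ω - M j ω| ^ q))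
        (IA.add hfg) ((hEd.add IB).const_mul _),
      integral_add (f := fun ω => |M j ω| ^ q)
        (g := fun ω => (q * M j ω * |M j ω| ^ (q - 2)) * (M (j+1) ω - M j ω)) IA hfg,
      integral_const_mul,
      integral_add (f := fun ω => |M j ω| ^ (q - 2) * (M (j+1) ω - M j ω) ^ 2)
        (g := fun ω => |M (j+1) ω - M j ω| ^ q) hEd IB]
  rw [hsplit1, hS1] at hmono
  have hfin := mul_le_mul_of_nonneg_left (add_le_add hS2 hd) hCqnn
  linarith [hmono, hfin]


lemma bk_bernoulli {p : ℝ} (hp : 1 ≤ p) {t : ℝ} (ht : 1 ≤ t) :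
    t ^ p + p * t ^ (p - 1) ≤ (t + 1) ^ p := by
  have ht0 : (0:ℝ) < t := by linarith
  have h1 : 1 + p * (1/t) ≤ (1 + 1/t) ^ p :=
    one_add_mul_self_le_rpow_one_add (le_trans (by norm_num : (-1:ℝ) ≤ 0) (by positivity)) hp
  have h2 : t ^ p * (1 + p * (1/t)) ≤ t ^ p * (1 + 1/t) ^ p :=
    mul_le_mul_of_nonneg_left h1 (Real.rpow_nonneg ht0.le _)
  have h3 : t ^ p * (1 + 1/t) ^ p = (t + 1) ^ p := by
    rw [← Real.mul_rpow ht0.le (by positivity)]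
    congr 1; field_simp
  have h4 : t ^ p * (1 + p * (1/t)) = t ^ p + p * t ^ (p - 1) := by
    rw [Real.rpow_sub ht0, Real.rpow_one]
    field_simp
  linarith [h2, h3.le, h3.ge, h4.le, h4.ge]

lemma bk_rec {p K c : ℝ} (hp : 1 ≤ p) (hK : 0 < K) (hc : 0 < c)
    (a : ℕ → ℝ) (hnn : ∀ k, 0 ≤ a k)
    (h1 : a 1 ≤ K)
    (hstep : ∀ j : ℕ, 1 ≤ j → a (j+1) ≤ a j + c * ((a j) ^ (1 - 1/p) * K ^ (1/p) + K)) :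
    ∀ k : ℕ, 1 ≤ k → a k ≤ (max ((2*c) ^ p) (max (2*c) 1)) * K * (k:ℝ) ^ p := by
  set C := max ((2*c) ^ p) (max (2*c) 1) with hC
  have hp0 : 0 < p := by linarith
  have hC1 : 1 ≤ C := le_trans (le_max_right _ _) (le_max_right _ _)
  have hC0 : 0 < C := by linarith
  have hC2c : 2*c ≤ C := le_trans (le_max_left _ _) (le_max_right _ _)
  have hCroot : 2*c ≤ C ^ (1/p) := by
    have h1 : (2*c) ^ p ≤ C := le_max_left _ _
    have h2 : ((2*c) ^ p) ^ (1/p) ≤ C ^ (1/p) :=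
      Real.rpow_le_rpow (Real.rpow_nonneg (by linarith) _) h1 (by positivity)
    have h3 : ((2*c) ^ p) ^ (1/p) = 2*c := by
      rw [← Real.rpow_mul (by linarith : (0:ℝ) ≤ 2*c)]
      rw [mul_one_div, div_self (ne_of_gt hp0), Real.rpow_one]
    linarith [h2, h3.le, h3.ge]
  -- key : c * C ^ (1 - 1/p) ≤ C / 2
  have hkey : c * C ^ (1 - 1/p) ≤ C / 2 := by
    have hCsplit : C ^ (1/p) * C ^ (1 - 1/p) = C := by
      rw [← Real.rpow_add hC0]; norm_num
    have hCpow_nn : 0 ≤ C ^ (1 - 1/p) := Real.rpow_nonneg hC0.le _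
    nlinarith [mul_le_mul_of_nonneg_right hCroot hCpow_nn]
  intro k hk
  induction k, hk using Nat.le_induction with
  | base =>
    have : ((1:ℕ):ℝ) ^ p = 1 := by norm_num
    rw [this, mul_one]
    nlinarith [h1, hK.le]
  | succ j hj ih =>
    have hj1 : (1:ℝ) ≤ (j:ℝ) := by exact_mod_cast hj
    have hjp : (0:ℝ) < (j:ℝ) := by linarith
    have hstepj := hstep j hj
    -- (a j)^(1-1/p) ≤ (C K j^p)^(1-1/p) = C^(1-1/p) K^(1-1/p) j^(p-1)
    have hexp_nn : (0:ℝ) ≤ 1 - 1/p := by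
      have : 1/p ≤ 1 := by rw [div_le_one hp0]; exact hp
      linarith
    have hbound : (a j) ^ (1 - 1/p) ≤ C ^ (1 - 1/p) * K ^ (1 - 1/p) * ((j:ℝ) ^ p) ^ (1 - 1/p) := by
      have h1 : (a j) ^ (1 - 1/p) ≤ (C * K * (j:ℝ) ^ p) ^ (1 - 1/p) :=
        Real.rpow_le_rpow (hnn j) ih hexp_nn
      have h2 : (C * K * (j:ℝ) ^ p) ^ (1 - 1/p)
          = C ^ (1 - 1/p) * K ^ (1 - 1/p) * ((j:ℝ) ^ p) ^ (1 - 1/p) := by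
        rw [Real.mul_rpow (by positivity) (Real.rpow_nonneg hjp.le _),
          Real.mul_rpow hC0.le hK.le]
      linarith [h1, h2.le, h2.ge]
    have hKsplit : K ^ (1 - 1/p) * K ^ (1/p) = K := by
      rw [← Real.rpow_add hK]; norm_num
    have hjsplit : ((j:ℝ) ^ p) ^ (1 - 1/p) = (j:ℝ) ^ (p - 1) := by
      rw [← Real.rpow_mul hjp.le]
      congr 1; field_simp
    have hjp1 : (1:ℝ) ≤ (j:ℝ) ^ (p - 1) :=
      Real.one_le_rpow hj1 (by linarith)
    have hjpn : (0:ℝ) ≤ (j:ℝ) ^ (p - 1) := by linarith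
    have hbern := bk_bernoulli hp hj1
    -- main chain
    have hmain : a j + c * ((a j) ^ (1 - 1/p) * K ^ (1/p) + K)
        ≤ C * K * (j:ℝ) ^ p + (C/2) * K * (j:ℝ) ^ (p-1) + (C/2) * K := by
      have hKp_nn : 0 ≤ K ^ (1/p) := Real.rpow_nonneg hK.le _
      have t1 : c * ((a j) ^ (1 - 1/p) * K ^ (1/p))
          ≤ c * (C ^ (1 - 1/p) * K ^ (1 - 1/p) * ((j:ℝ) ^ p) ^ (1 - 1/p) * K ^ (1/p)) := by
        apply mul_le_mul_of_nonneg_left _ hc.le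
        exact mul_le_mul_of_nonneg_right hbound hKp_nn
      have t2 : c * (C ^ (1 - 1/p) * K ^ (1 - 1/p) * ((j:ℝ) ^ p) ^ (1 - 1/p) * K ^ (1/p))
          = (c * C ^ (1 - 1/p)) * K * (j:ℝ) ^ (p-1) := by
        rw [hjsplit]
        rw [show C ^ (1 - 1/p) * K ^ (1 - 1/p) * (j:ℝ) ^ (p-1) * K ^ (1/p)
          = C ^ (1 - 1/p) * (K ^ (1 - 1/p) * K ^ (1/p)) * (j:ℝ) ^ (p-1) from by ring, hKsplit]
        ring
      have t3 : (c * C ^ (1 - 1/p)) * K * (j:ℝ) ^ (p-1) ≤ (C/2) * K * (j:ℝ) ^ (p-1) := by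
        apply mul_le_mul_of_nonneg_right _ hjpn
        exact mul_le_mul_of_nonneg_right hkey hK.le
      have t4 : c * K ≤ (C/2) * K := by nlinarith
      have texp : c * ((a j) ^ (1 - 1/p) * K ^ (1/p) + K)
          = c * ((a j) ^ (1 - 1/p) * K ^ (1/p)) + c * K := by ring
      linarith [ih, t1, t2.le, t2.ge, t3, t4, texp.le, texp.ge]
    have hfinal : C * K * (j:ℝ) ^ p + (C/2) * K * (j:ℝ) ^ (p-1) + (C/2) * K
        ≤ C * K * ((j:ℝ) + 1) ^ p := by
      have h5 : (j:ℝ) ^ p + p * (j:ℝ) ^ (p-1) ≤ ((j:ℝ)+1) ^ p := hbern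
      have h6 : (1:ℝ) ≤ p * (j:ℝ) ^ (p-1) := by
        have := mul_le_mul hp hjp1 zero_le_one (by linarith : (0:ℝ) ≤ p)
        simpa using this
      have h7 : (j:ℝ) ^ (p-1) ≤ p * (j:ℝ) ^ (p-1) := by
        have := mul_nonneg (by linarith : (0:ℝ) ≤ p - 1) hjpn
        nlinarith
      linarith [mul_le_mul_of_nonneg_left h5 (by positivity : (0:ℝ) ≤ C * K),
        mul_le_mul_of_nonneg_left h6 (by positivity : (0:ℝ) ≤ C/2 * K),
        mul_le_mul_of_nonneg_left h7 (by positivity : (0:ℝ) ≤ C/2 * K)]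
    have hcast : ((j:ℝ) + 1) = ((j+1 : ℕ):ℝ) := by push_cast; ring
    calc a (j+1) ≤ a j + c * ((a j) ^ (1 - 1/p) * K ^ (1/p) + K) := hstepj
      _ ≤ C * K * (j:ℝ) ^ p + (C/2) * K * (j:ℝ) ^ (p-1) + (C/2) * K := hmain
      _ ≤ C * K * ((j:ℝ) + 1) ^ p := hfinal
      _ = C * K * ((j+1 : ℕ):ℝ) ^ p := by rw [hcast]


/-- Burkholder-type moment bound for martingales: if `(M_k)` is a martingale with `M_0 = 0`
and `E|M_i − M_{i−1}|^{2p} ≤ K` for all `i ≥ 1`, then `E|M_k|^{2p} ≤ C K k^p`, where the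
constant `C > 0` depends only on `p`. -/
theorem stmt5 (p : ℝ) (hp : 1 ≤ p) :
    ∃ C : ℝ, 0 < C ∧
      ∀ (Ω : Type) (m : MeasurableSpace Ω) (μ : Measure Ω), IsProbabilityMeasure μ →
        ∀ (ℱ : Filtration ℕ m) (M : ℕ → Ω → ℝ), Martingale M ℱ μ →
          (∀ ω, M 0 ω = 0) →
          ∀ K : ℝ, 0 < K →
            (∀ i : ℕ, 1 ≤ i →
              ∫⁻ ω, ENNReal.ofReal (|M i ω - M (i - 1) ω| ^ (2 * p)) ∂μ ≤ ENNReal.ofReal K) →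
            ∀ k : ℕ, 1 ≤ k →
              ∫⁻ ω, ENNReal.ofReal (|M k ω| ^ (2 * p)) ∂μ ≤
                ENNReal.ofReal (C * K * (k : ℝ) ^ p) := by
  set c : ℝ := (2*p) * (2*p - 1) * 2 ^ (2*p) with hcdef
  have hc : 0 < c := by
    have h2 : (0:ℝ) < 2 ^ (2*p) := Real.rpow_pos_of_pos two_pos _
    have h3 : (0:ℝ) < 2*p - 1 := by linarith
    have h4 : (0:ℝ) < 2*p := by linarith
    exact mul_pos (mul_pos h4 h3) h2
  refine ⟨max ((2*c) ^ p) (max (2*c) 1), ?_, ?_⟩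
  · exact lt_of_lt_of_le one_pos (le_trans (le_max_right _ _) (le_max_right _ _))
  intro Ω m μ hprob ℱ M hM hM0 K hK hbnd k hk
  have hq1 : (1:ℝ) ≤ 2*p := by linarith
  have hdmem : ∀ j : ℕ, MemLp (fun ω => M (j+1) ω - M j ω) (ENNReal.ofReal (2*p)) μ := by
    intro j
    have hb := hbnd (j+1) (by omega)
    rw [Nat.add_sub_cancel] at hb
    refine bk_memLp hq1 ?_ (ne_top_of_le_ne_top ENNReal.ofReal_ne_top hb)
    exact (((hM.stronglyAdapted (j+1)).mono (ℱ.le (j+1))).sub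
      ((hM.stronglyAdapted j).mono (ℱ.le j))).aestronglyMeasurable
  have hmem : ∀ i : ℕ, MemLp (M i) (ENNReal.ofReal (2*p)) μ := by
    intro i
    induction i with
    | zero =>
      have h0 : M 0 = fun _ : Ω => (0:ℝ) := funext hM0
      rw [h0]; exact memLp_const 0
    | succ j ih =>
      have heq : M (j+1) = fun ω => (M (j+1) ω - M j ω) + M j ω := funext fun ω => by ring
      rw [heq]; exact (hdmem j).add ih
  have hdK : ∀ j : ℕ, ∫ ω, |M (j+1) ω - M j ω| ^ (2*p) ∂μ ≤ K := by
    intro j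
    have hb := hbnd (j+1) (by omega)
    rw [Nat.add_sub_cancel] at hb
    rw [bk_lintegral_eq hq1 (hdmem j)] at hb
    exact (ENNReal.ofReal_le_ofReal_iff hK.le).mp hb
  have hnn : ∀ i : ℕ, 0 ≤ ∫ ω, |M i ω| ^ (2*p) ∂μ :=
    fun i => integral_nonneg fun ω => Real.rpow_nonneg (abs_nonneg _) _
  have h1 : ∫ ω, |M 1 ω| ^ (2*p) ∂μ ≤ K := by
    have heq : ∫ ω, |M 1 ω| ^ (2*p) ∂μ = ∫ ω, |M (0+1) ω - M 0 ω| ^ (2*p) ∂μ := by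
      apply integral_congr_ae; apply Filter.Eventually.of_forall; intro ω
      show |M 1 ω| ^ (2*p) = |M (0+1) ω - M 0 ω| ^ (2*p)
      rw [show M (0+1) ω - M 0 ω = M 1 ω from by rw [hM0 ω]; norm_num]
    rw [heq]; exact hdK 0
  have hstep : ∀ j : ℕ, 1 ≤ j →
      ∫ ω, |M (j+1) ω| ^ (2*p) ∂μ ≤ (∫ ω, |M j ω| ^ (2*p) ∂μ)
        + c * ((∫ ω, |M j ω| ^ (2*p) ∂μ) ^ (1 - 1/p) * K ^ (1/p) + K) := by
    intro j _
    have h := bk_step hp ℱ M hM j (hmem j) (hmem (j+1)) (hdK j)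
    rw [← hcdef] at h
    linarith [h]
  have hrec := bk_rec hp hK hc (fun i => ∫ ω, |M i ω| ^ (2*p) ∂μ) hnn h1 hstep k hk
  rw [bk_lintegral_eq hq1 (hmem k)]
  exact ENNReal.ofReal_le_ofReal hrec
end

section
/- Let λ > 0 and let q ≥ 1 be a real number. On a probability space, let (t_k)_{k≥1} be i.i.d. random variables exponentially distributed with parameter λ, set τ_m = t_1 + ⋯ + t_m, and let ℓ be a random variable taking values in the positive integers (defined on the same space, not assumed independent of (t_k)) such that E ℓ^{2(q+2)} < ∞. Then E τ_{2ℓ+1}^q < ∞; more precisely, there is a constant C depending only on λ and q such that E τ_{2ℓ+1}^q ≤ C ( 1 + ( E ℓ^{2(q+2)} )^{1/2} ). -/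
open MeasureTheory ProbabilityTheory

lemma pow_sum_le_aux {ι : Type*} (s : Finset ι) (f : ι → ENNReal) {r : ℝ} (hr : 0 < r) :
    (∑ i ∈ s, f i) ^ r ≤ (s.card : ENNReal) ^ r * ∑ i ∈ s, f i ^ r := by
  have key : ∀ i ∈ s, f i ≤ (∑ j ∈ s, f j ^ r) ^ (1/r) := by
    intro i hi
    have h1 : f i ^ r ≤ ∑ j ∈ s, f j ^ r :=
      Finset.single_le_sum (f := fun j => f j ^ r) (fun j _ => zero_le) hi
    have h2 := ENNReal.rpow_le_rpow h1 (by positivity : (0:ℝ) ≤ 1/r)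
    rwa [← ENNReal.rpow_mul, mul_one_div, div_self hr.ne', ENNReal.rpow_one] at h2
  have h3 : ∑ i ∈ s, f i ≤ (s.card : ENNReal) * (∑ j ∈ s, f j ^ r) ^ (1/r) := by
    calc ∑ i ∈ s, f i ≤ s.card • ((∑ j ∈ s, f j ^ r) ^ (1/r)) :=
          Finset.sum_le_card_nsmul s f _ key
    _ = _ := by rw [nsmul_eq_mul]
  calc (∑ i ∈ s, f i) ^ r ≤ ((s.card : ENNReal) * (∑ j ∈ s, f j ^ r) ^ (1/r)) ^ r :=
        ENNReal.rpow_le_rpow h3 hr.le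
  _ = (s.card : ENNReal) ^ r * ∑ j ∈ s, f j ^ r := by
      rw [ENNReal.mul_rpow_of_nonneg _ _ hr.le, ← ENNReal.rpow_mul, one_div,
        inv_mul_cancel₀ hr.ne', ENNReal.rpow_one]

lemma exp_moment_aux {lam : ℝ} (hlam : 0 < lam) {r : ℝ} (hr : 0 < r) :
    ∫⁻ x, ENNReal.ofReal x ^ r ∂(expMeasure lam)
      = ENNReal.ofReal (Real.Gamma (r+1) / lam ^ r) := by
  have hG : Measurable fun x : ℝ => ENNReal.ofReal x ^ r :=
    ENNReal.continuous_rpow_const.measurable.comp ENNReal.measurable_ofReal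
  have hpdf : Measurable (gammaPDF 1 lam) :=
    ENNReal.measurable_ofReal.comp (measurable_gammaPDFReal 1 lam)
  have h0 : expMeasure lam = volume.withDensity (gammaPDF 1 lam) := rfl
  have hGam : (0:ℝ) < Real.Gamma (r+1) := Real.Gamma_pos_of_pos (by linarith)
  have hlr : (0:ℝ) < lam ^ r := Real.rpow_pos_of_pos hlam r
  rw [h0, lintegral_withDensity_eq_lintegral_mul volume hpdf hG]
  have hptwise : ∀ x : ℝ, (gammaPDF 1 lam * fun x => ENNReal.ofReal x ^ r) x
      = ENNReal.ofReal (Real.Gamma (r+1) / lam ^ r) * gammaPDF (r+1) lam x := by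
    intro x
    simp only [Pi.mul_apply]
    rcases lt_or_ge x 0 with hx | hx
    · rw [gammaPDF_of_neg hx, gammaPDF_of_neg hx, zero_mul, mul_zero]
    · rw [gammaPDF_of_nonneg hx, gammaPDF_of_nonneg hx,
        ENNReal.ofReal_rpow_of_nonneg hx hr.le,
        ← ENNReal.ofReal_mul (by positivity), ← ENNReal.ofReal_mul (by positivity)]
      congr 1
      have h1 : lam ^ (r+1) = lam ^ r * lam := by
        rw [Real.rpow_add hlam, Real.rpow_one]
      simp only [Real.Gamma_one, Real.rpow_one, sub_self, Real.rpow_zero,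
        add_sub_cancel_right, div_one, mul_one, h1]
      field_simp
  rw [lintegral_congr hptwise,
    lintegral_const_mul' _ _ ENNReal.ofReal_ne_top,
    lintegral_gammaPDF_eq_one (by linarith : (0:ℝ) < r + 1) hlam, mul_one]

/-- If `(t_k)` are i.i.d. exponential of rate `λ` (indexed here so that `t k` is `t_{k+1}`,
`τ_m = ∑_{i<m} t_i`), and `ℓ` is a positive-integer-valued random variable with
`E ℓ^{2(q+2)} < ∞`, then `E τ_{2ℓ+1}^q < ∞`; more precisely
`E τ_{2ℓ+1}^q ≤ C (1 + (E ℓ^{2(q+2)})^{1/2})` for a constant `C` depending only on `λ, q`. -/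
theorem stmt6 (lam q : ℝ) (hlam : 0 < lam) (hq : 1 ≤ q) :
    ∃ C : ℝ, 0 < C ∧
      ∀ (Ω : Type) (mΩ : MeasurableSpace Ω) (μ : Measure Ω), IsProbabilityMeasure μ →
        ∀ t : ℕ → Ω → ℝ, (∀ k, Measurable (t k)) →
          iIndepFun t μ →
          (∀ k, μ.map (t k) = expMeasure lam) →
          ∀ ℓ : Ω → ℕ, Measurable ℓ → (∀ ω, 1 ≤ ℓ ω) →
            (∫⁻ ω, (ℓ ω : ENNReal) ^ (2 * (q + 2)) ∂μ) < ⊤ →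
            (∫⁻ ω, ENNReal.ofReal ((∑ i ∈ Finset.range (2 * ℓ ω + 1), t i ω) ^ q) ∂μ) < ⊤ ∧
            (∫⁻ ω, ENNReal.ofReal ((∑ i ∈ Finset.range (2 * ℓ ω + 1), t i ω) ^ q) ∂μ) ≤
              ENNReal.ofReal C *
                (1 + (∫⁻ ω, (ℓ ω : ENNReal) ^ (2 * (q + 2)) ∂μ) ^ ((1 : ℝ) / 2)) := by
  have hq0 : (0:ℝ) < q := by linarith
  -- the moment of the exponential distribution
  set c : ℝ := Real.Gamma (2*q+1) / lam ^ (2*q) with hc_def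
  set M : ENNReal := ENNReal.ofReal c with hM_def
  have hMtop : M ≠ ⊤ := ENNReal.ofReal_ne_top
  -- the series ∑ (n+1)^{-3/2}
  have hSr : Summable (fun n : ℕ => ((n:ℝ)+1) ^ (-(3/2) : ℝ)) := by
    have h1 : Summable (fun n : ℕ => (n:ℝ) ^ (-(3/2) : ℝ)) :=
      Real.summable_nat_rpow.mpr (by norm_num)
    have h2 := h1.comp_injective Nat.succ_injective
    apply h2.congr
    intro n
    simp only [Function.comp_apply]
    congr 1
    push_cast
    ring
  set Sen : ENNReal := ∑' n:ℕ, ENNReal.ofReal (((n:ℝ)+1) ^ (-(3/2):ℝ)) with hSen_def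
  have hSen_top : Sen ≠ ⊤ := by
    rw [hSen_def, ← ENNReal.ofReal_tsum_of_nonneg
      (fun n => Real.rpow_nonneg (by positivity) _) hSr]
    exact ENNReal.ofReal_ne_top
  set K0 : ENNReal := (3:ENNReal) ^ (q + 1/2) * M ^ ((1:ℝ)/2) * Sen with hK0_def
  have hK0_top : K0 ≠ ⊤ := by
    apply ENNReal.mul_ne_top (ENNReal.mul_ne_top ?_ ?_) hSen_top
    · exact ENNReal.rpow_ne_top_of_nonneg (by linarith) (by norm_num)
    · exact ENNReal.rpow_ne_top_of_nonneg (by norm_num) hMtop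
  refine ⟨K0.toReal + 1, by positivity, ?_⟩
  have hK0C : K0 ≤ ENNReal.ofReal (K0.toReal + 1) := by
    calc K0 = ENNReal.ofReal K0.toReal := (ENNReal.ofReal_toReal hK0_top).symm
    _ ≤ _ := ENNReal.ofReal_le_ofReal (by linarith)
  intro Ω mΩ μ hμ t ht hindep hmap ℓ hℓ hℓ1 hAfin
  set A : ENNReal := ∫⁻ ω, (ℓ ω : ENNReal) ^ (2 * (q + 2)) ∂μ with hA_def
  set T : ℕ → Ω → ENNReal := fun i ω => ENNReal.ofReal (t i ω) with hT_def
  have hT : ∀ i, Measurable (T i) := fun i => ENNReal.measurable_ofReal.comp (ht i)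
  set F : ℕ → Ω → ENNReal := fun m ω => (∑ i ∈ Finset.range (2*m+1), T i ω) ^ q with hF_def
  have hF : ∀ m, Measurable (F m) := fun m =>
    ENNReal.continuous_rpow_const.measurable.comp
      (Finset.measurable_sum _ (fun i _ => hT i))
  -- Step 1: marginal moments
  have hmom : ∀ i, ∫⁻ ω, T i ω ^ (2*q) ∂μ = M := by
    intro i
    have hG : Measurable fun x : ℝ => ENNReal.ofReal x ^ (2*q) :=
      ENNReal.continuous_rpow_const.measurable.comp ENNReal.measurable_ofReal
    rw [hT_def]
    rw [show (∫⁻ ω, ENNReal.ofReal (t i ω) ^ (2*q) ∂μ)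
        = ∫⁻ x, ENNReal.ofReal x ^ (2*q) ∂(μ.map (t i)) from (lintegral_map hG (ht i)).symm,
      hmap i, exp_moment_aux hlam (by linarith : (0:ℝ) < 2*q)]
  -- Step 2: moments of partial sums
  have hsum_mom : ∀ m : ℕ, ∫⁻ ω, (∑ i ∈ Finset.range m, T i ω) ^ (2*q) ∂μ
      ≤ (m : ENNReal) ^ (2*q) * ((m : ENNReal) * M) := by
    intro m
    have h1 : ∀ ω, (∑ i ∈ Finset.range m, T i ω) ^ (2*q)
        ≤ (m : ENNReal) ^ (2*q) * ∑ i ∈ Finset.range m, T i ω ^ (2*q) := by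
      intro ω
      simpa [Finset.card_range] using
        pow_sum_le_aux (Finset.range m) (fun i => T i ω) (by linarith : (0:ℝ) < 2*q)
    calc ∫⁻ ω, (∑ i ∈ Finset.range m, T i ω) ^ (2*q) ∂μ
        ≤ ∫⁻ ω, (m : ENNReal) ^ (2*q) * ∑ i ∈ Finset.range m, T i ω ^ (2*q) ∂μ :=
          lintegral_mono h1
    _ = (m : ENNReal) ^ (2*q) * ∫⁻ ω, ∑ i ∈ Finset.range m, T i ω ^ (2*q) ∂μ :=
          lintegral_const_mul' _ _
            (ENNReal.rpow_ne_top_of_nonneg (by linarith) (ENNReal.natCast_ne_top m))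
    _ = (m : ENNReal) ^ (2*q) * ∑ i ∈ Finset.range m, ∫⁻ ω, T i ω ^ (2*q) ∂μ := by
          have hTi : ∀ i, Measurable fun ω => T i ω ^ (2*q) := fun i =>
            ENNReal.continuous_rpow_const.measurable.comp (hT i)
          rw [lintegral_finset_sum _ (fun i _ => hTi i)]
    _ = (m : ENNReal) ^ (2*q) * ((m : ENNReal) * M) := by
          simp only [hmom, Finset.sum_const, Finset.card_range, nsmul_eq_mul]
  -- a.e. nonnegativity
  have hpos : ∀ᵐ ω ∂μ, ∀ i, 0 ≤ t i ω := by
    rw [ae_all_iff]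
    intro i
    have hnull : μ {ω | t i ω < 0} = 0 := by
      have h1 : μ {ω | t i ω < 0} = (μ.map (t i)) (Set.Iio 0) := by
        rw [Measure.map_apply (ht i) measurableSet_Iio]; rfl
      rw [h1, hmap i]
      show (volume.withDensity (gammaPDF 1 lam)) (Set.Iio 0) = 0
      rw [withDensity_apply _ measurableSet_Iio]
      exact lintegral_gammaPDF_of_nonpos le_rfl
    rw [ae_iff]
    simpa [not_le] using hnull
  -- decomposition
  set g : ℕ → Ω → ENNReal := fun n => Set.indicator (ℓ ⁻¹' {n}) (F n) with hg_def
  have hg_meas : ∀ n, Measurable (g n) := fun n =>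
    (hF n).indicator (hℓ (measurableSet_singleton n))
  have hdecomp : (∫⁻ ω, ENNReal.ofReal ((∑ i ∈ Finset.range (2 * ℓ ω + 1), t i ω) ^ q) ∂μ)
      = ∑' n, ∫⁻ ω, g n ω ∂μ := by
    rw [← lintegral_tsum (fun n => (hg_meas n).aemeasurable)]
    apply lintegral_congr_ae
    filter_upwards [hpos] with ω hω
    have hsum0 : (0:ℝ) ≤ ∑ i ∈ Finset.range (2 * ℓ ω + 1), t i ω :=
      Finset.sum_nonneg fun i _ => hω i
    have e1 : ENNReal.ofReal ((∑ i ∈ Finset.range (2 * ℓ ω + 1), t i ω) ^ q)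
        = F (ℓ ω) ω := by
      rw [hF_def]
      simp only [hT_def]
      rw [← ENNReal.ofReal_rpow_of_nonneg hsum0 hq0.le,
        ENNReal.ofReal_sum_of_nonneg (fun i _ => hω i)]
    rw [e1]
    symm
    rw [tsum_eq_single (ℓ ω) (fun n hn => Set.indicator_of_notMem (by simpa using hn.symm) _)]
    exact Set.indicator_of_mem (by simp) _
  -- g 0 vanishes
  have hg0 : ∫⁻ ω, g 0 ω ∂μ = 0 := by
    have h0 : ∀ ω, g 0 ω = 0 := by
      intro ω
      exact Set.indicator_of_notMem (by simpa using (Nat.one_le_iff_ne_zero.mp (hℓ1 ω))) _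
    simp [h0]
  -- the key bound for each n
  have key : ∀ n : ℕ, ∫⁻ ω, g (n+1) ω ∂μ ≤
      ((3:ENNReal) ^ (q + 1/2) * M ^ ((1:ℝ)/2) * A ^ ((1:ℝ)/2))
        * ENNReal.ofReal (((n:ℝ)+1) ^ (-(3/2):ℝ)) := by
    intro n
    set m : ℕ := n + 1 with hm_def
    have hm0 : ((m : ENNReal)) ≠ 0 := by
      simp [hm_def]
    have hmtop : ((m : ENNReal)) ≠ ⊤ := ENNReal.natCast_ne_top m
    have hmpos : (0:ENNReal) < (m : ENNReal) := pos_iff_ne_zero.mpr hm0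
    -- pointwise bound
    have hpt : ∀ ω, g m ω ≤ (m : ENNReal) ^ (-(q+2):ℝ) * ((ℓ ω : ENNReal) ^ (q+2) * F m ω) := by
      intro ω
      by_cases hω : ℓ ω = m
      · rw [hg_def]
        simp only []
        rw [Set.indicator_of_mem (by simpa using hω)]
        rw [hω, ← mul_assoc, ← ENNReal.rpow_add _ _ hm0 hmtop, neg_add_cancel,
          ENNReal.rpow_zero, one_mul]
      · rw [hg_def]
        simp only []
        rw [Set.indicator_of_notMem (by simpa using hω)]
        exact zero_le
    have hconst_top : (m : ENNReal) ^ (-(q+2):ℝ) ≠ ⊤ := by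
      rw [ENNReal.rpow_neg]
      exact ENNReal.inv_ne_top.mpr (ENNReal.rpow_pos hmpos hmtop).ne'
    have hLmeas : Measurable (fun ω => (ℓ ω : ENNReal) ^ (q+2)) :=
      ENNReal.continuous_rpow_const.measurable.comp (measurable_from_top.comp hℓ)
    have hHolder : (∫⁻ ω, (ℓ ω : ENNReal) ^ (q+2) * F m ω ∂μ)
        ≤ (∫⁻ ω, ((ℓ ω : ENNReal) ^ (q+2)) ^ (2:ℝ) ∂μ) ^ ((1:ℝ)/2)
          * (∫⁻ ω, (F m ω) ^ (2:ℝ) ∂μ) ^ ((1:ℝ)/2) := by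
      exact ENNReal.lintegral_mul_le_Lp_mul_Lq μ
        Real.HolderConjugate.two_two hLmeas.aemeasurable (hF m).aemeasurable
    have e2 : (∫⁻ ω, ((ℓ ω : ENNReal) ^ (q+2)) ^ (2:ℝ) ∂μ) = A := by
      rw [hA_def]
      apply lintegral_congr
      intro ω
      rw [← ENNReal.rpow_mul, mul_comm (q+2) 2]
    have e3 : (∫⁻ ω, (F m ω) ^ (2:ℝ) ∂μ)
        = ∫⁻ ω, (∑ i ∈ Finset.range (2*m+1), T i ω) ^ (2*q) ∂μ := by
      apply lintegral_congr
      intro ω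
      rw [hF_def]
      simp only []
      rw [← ENNReal.rpow_mul, mul_comm q 2]
    -- bound the 2q-moment of the partial sum
    have h3m0 : ((3*m : ℕ) : ENNReal) ≠ 0 := by
      simp [hm_def]
    have h3mtop : ((3*m : ℕ) : ENNReal) ≠ ⊤ := ENNReal.natCast_ne_top _
    have hJ : (∫⁻ ω, (∑ i ∈ Finset.range (2*m+1), T i ω) ^ (2*q) ∂μ)
        ≤ ((3*m : ℕ) : ENNReal) ^ (2*q+1) * M := by
      calc (∫⁻ ω, (∑ i ∈ Finset.range (2*m+1), T i ω) ^ (2*q) ∂μ)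
          ≤ ((2*m+1 : ℕ) : ENNReal) ^ (2*q) * (((2*m+1 : ℕ) : ENNReal)) * M := by
            rw [mul_assoc]
            exact hsum_mom (2*m+1)
      _ ≤ ((3*m : ℕ) : ENNReal) ^ (2*q) * (((3*m : ℕ) : ENNReal)) * M := by
            have hle : ((2*m+1 : ℕ) : ENNReal) ≤ ((3*m : ℕ) : ENNReal) :=
              Nat.cast_le.mpr (by omega)
            gcongr
      _ = ((3*m : ℕ) : ENNReal) ^ (2*q+1) * M := by
            rw [ENNReal.rpow_add _ _ h3m0 h3mtop, ENNReal.rpow_one]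
    have hJhalf : (∫⁻ ω, (∑ i ∈ Finset.range (2*m+1), T i ω) ^ (2*q) ∂μ) ^ ((1:ℝ)/2)
        ≤ ((3*m : ℕ) : ENNReal) ^ (q+1/2) * M ^ ((1:ℝ)/2) := by
      calc (∫⁻ ω, (∑ i ∈ Finset.range (2*m+1), T i ω) ^ (2*q) ∂μ) ^ ((1:ℝ)/2)
          ≤ (((3*m : ℕ) : ENNReal) ^ (2*q+1) * M) ^ ((1:ℝ)/2) :=
            ENNReal.rpow_le_rpow hJ (by norm_num)
      _ = ((3*m : ℕ) : ENNReal) ^ (q+1/2) * M ^ ((1:ℝ)/2) := by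
            rw [ENNReal.mul_rpow_of_nonneg _ _ (by norm_num : (0:ℝ) ≤ 1/2),
              ← ENNReal.rpow_mul]
            congr 2
            ring
    -- put everything together
    have hsplit : ((3*m : ℕ) : ENNReal) ^ (q+1/2)
        = (3:ENNReal) ^ (q+1/2) * (m : ENNReal) ^ (q+1/2) := by
      rw [show ((3*m : ℕ) : ENNReal) = 3 * (m : ENNReal) by push_cast; ring,
        ENNReal.mul_rpow_of_nonneg _ _ (by linarith : (0:ℝ) ≤ q+1/2)]
    have hmm : (m : ENNReal) ^ (-(q+2):ℝ) * (m : ENNReal) ^ (q+1/2)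
        = ENNReal.ofReal (((n:ℝ)+1) ^ (-(3/2):ℝ)) := by
      rw [← ENNReal.rpow_add _ _ hm0 hmtop,
        show -(q+2) + (q+1/2) = (-(3/2):ℝ) by ring]
      rw [show ((m : ENNReal)) = ENNReal.ofReal ((m:ℕ):ℝ) by
          rw [ENNReal.ofReal_natCast],
        ENNReal.ofReal_rpow_of_pos (by positivity)]
      congr 2
      push_cast [hm_def]
      ring
    calc ∫⁻ ω, g m ω ∂μ
        ≤ ∫⁻ ω, (m : ENNReal) ^ (-(q+2):ℝ) * ((ℓ ω : ENNReal) ^ (q+2) * F m ω) ∂μ :=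
          lintegral_mono hpt
    _ = (m : ENNReal) ^ (-(q+2):ℝ) * ∫⁻ ω, (ℓ ω : ENNReal) ^ (q+2) * F m ω ∂μ :=
          lintegral_const_mul' _ _ hconst_top
    _ ≤ (m : ENNReal) ^ (-(q+2):ℝ) *
          (A ^ ((1:ℝ)/2) * (((3*m : ℕ) : ENNReal) ^ (q+1/2) * M ^ ((1:ℝ)/2))) := by
          apply mul_le_mul_right
          calc (∫⁻ ω, (ℓ ω : ENNReal) ^ (q+2) * F m ω ∂μ)
              ≤ (∫⁻ ω, ((ℓ ω : ENNReal) ^ (q+2)) ^ (2:ℝ) ∂μ) ^ ((1:ℝ)/2)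
                * (∫⁻ ω, (F m ω) ^ (2:ℝ) ∂μ) ^ ((1:ℝ)/2) := hHolder
          _ = A ^ ((1:ℝ)/2)
                * (∫⁻ ω, (∑ i ∈ Finset.range (2*m+1), T i ω) ^ (2*q) ∂μ) ^ ((1:ℝ)/2) := by
                rw [e2, e3]
          _ ≤ _ := mul_le_mul_right hJhalf _
    _ = ((3:ENNReal) ^ (q + 1/2) * M ^ ((1:ℝ)/2) * A ^ ((1:ℝ)/2))
          * ((m : ENNReal) ^ (-(q+2):ℝ) * (m : ENNReal) ^ (q+1/2)) := by
          rw [hsplit]; ring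
    _ = _ := by rw [hmm]
  -- assemble
  rw [hdecomp]
  have hfinal : ∑' n, ∫⁻ ω, g n ω ∂μ ≤ K0 * A ^ ((1:ℝ)/2) := by
    rw [tsum_eq_zero_add' ENNReal.summable, hg0, zero_add]
    calc ∑' n, ∫⁻ ω, g (n+1) ω ∂μ
        ≤ ∑' (n : ℕ), ((3:ENNReal) ^ (q + 1/2) * M ^ ((1:ℝ)/2) * A ^ ((1:ℝ)/2))
          * ENNReal.ofReal (((n:ℝ)+1) ^ (-(3/2):ℝ)) := ENNReal.tsum_le_tsum key
    _ = ((3:ENNReal) ^ (q + 1/2) * M ^ ((1:ℝ)/2) * A ^ ((1:ℝ)/2)) * Sen := by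
          rw [ENNReal.tsum_mul_left, hSen_def]
    _ = K0 * A ^ ((1:ℝ)/2) := by rw [hK0_def]; ring
  have hRHS : K0 * A ^ ((1:ℝ)/2)
      ≤ ENNReal.ofReal (K0.toReal + 1) * (1 + A ^ ((1:ℝ)/2)) := by
    apply mul_le_mul' hK0C
    exact le_add_self
  have hRHSfin : ENNReal.ofReal (K0.toReal + 1) * (1 + A ^ ((1:ℝ)/2)) < ⊤ := by
    apply ENNReal.mul_lt_top ENNReal.ofReal_lt_top
    apply ENNReal.add_lt_top.mpr
    exact ⟨ENNReal.one_lt_top, ENNReal.rpow_lt_top_of_nonneg (by norm_num) hAfin.ne⟩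
  exact ⟨lt_of_le_of_lt (hfinal.trans hRHS) hRHSfin, hfinal.trans hRHS⟩
end

section
/- Let A, G, E be events on a probability space and let q ∈ (0,1]. Assume that A ∩ Eᶜ = G ∩ Eᶜ, that P(A) ≥ q and P(G) ≥ q, and that P(A ∩ G ∩ E) ≥ P(A ∩ E) · P(G ∩ E). Then P(A ∩ G) ≥ (q/2)². -/
open MeasureTheory

/-- An elementary event estimate (Step 4 of Lemma 5.2): if `A ∩ Eᶜ = G ∩ Eᶜ`,
`P(A) ≥ q`, `P(G) ≥ q` and `P(A ∩ G ∩ E) ≥ P(A ∩ E) P(G ∩ E)`, then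
`P(A ∩ G) ≥ (q/2)²`. -/
theorem stmt7 {Ω : Type*} [MeasurableSpace Ω] (μ : Measure Ω) [IsProbabilityMeasure μ]
    (A G E : Set Ω) (hA : MeasurableSet A) (hG : MeasurableSet G) (hE : MeasurableSet E)
    (q : ℝ) (hq0 : 0 < q) (hq1 : q ≤ 1)
    (hAG : A ∩ Eᶜ = G ∩ Eᶜ)
    (hPA : ENNReal.ofReal q ≤ μ A) (hPG : ENNReal.ofReal q ≤ μ G)
    (hprod : μ (A ∩ E) * μ (G ∩ E) ≤ μ (A ∩ G ∩ E)) :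
    ENNReal.ofReal ((q / 2) ^ 2) ≤ μ (A ∩ G) := by
  have hAE : A ∩ Eᶜ ⊆ A ∩ G := by
    intro x hx
    exact ⟨hx.1, (hAG ▸ hx).1⟩
  by_cases hcase : ENNReal.ofReal ((q/2)^2) ≤ μ (A ∩ Eᶜ)
  · exact le_trans hcase (measure_mono hAE)
  push_neg at hcase
  have hAsplit : μ (A ∩ E) + μ (A ∩ Eᶜ) = μ A := by
    rw [← measure_inter_add_diff A hE]; congr 1
  have hGsplit : μ (G ∩ E) + μ (G ∩ Eᶜ) = μ G := by
    rw [← measure_inter_add_diff G hE]; congr 1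
  have hGE' : μ (G ∩ Eᶜ) = μ (A ∩ Eᶜ) := by rw [hAG]
  have hr0 : 0 ≤ q - (q/2)^2 := by nlinarith
  have hAEbound : ENNReal.ofReal (q - (q/2)^2) ≤ μ (A ∩ E) := by
    rw [ENNReal.ofReal_sub _ (by positivity)]
    refine tsub_le_iff_right.mpr ?_
    calc ENNReal.ofReal q ≤ μ A := hPA
      _ = μ (A ∩ E) + μ (A ∩ Eᶜ) := hAsplit.symm
      _ ≤ μ (A ∩ E) + ENNReal.ofReal ((q/2)^2) := add_le_add_right hcase.le _
  have hGEbound : ENNReal.ofReal (q - (q/2)^2) ≤ μ (G ∩ E) := by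
    rw [ENNReal.ofReal_sub _ (by positivity)]
    refine tsub_le_iff_right.mpr ?_
    calc ENNReal.ofReal q ≤ μ G := hPG
      _ = μ (G ∩ E) + μ (G ∩ Eᶜ) := hGsplit.symm
      _ = μ (G ∩ E) + μ (A ∩ Eᶜ) := by rw [hGE']
      _ ≤ μ (G ∩ E) + ENNReal.ofReal ((q/2)^2) := add_le_add_right hcase.le _
  calc ENNReal.ofReal ((q/2)^2)
      ≤ ENNReal.ofReal ((q - (q/2)^2) * (q - (q/2)^2)) := ENNReal.ofReal_le_ofReal (by nlinarith)
    _ = ENNReal.ofReal (q - (q/2)^2) * ENNReal.ofReal (q - (q/2)^2) := ENNReal.ofReal_mul hr0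
    _ ≤ μ (A ∩ E) * μ (G ∩ E) := mul_le_mul' hAEbound hGEbound
    _ ≤ μ (A ∩ G ∩ E) := hprod
    _ ≤ μ (A ∩ G) := measure_mono Set.inter_subset_left
end
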